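/- arXiv:1910.08764 — 3 statements merged into one kernel-verified Lean document; each statement's English description precedes it below -/
import Mathlib

section
/- Let n ≥ 2 be a natural number and let a be a complex number with |a| = 1 satisfying: if n is even then Re(a) ≥ 0 and N = n/2; if n is odd then Re(a) = 0 and N = (n+1)/2 when a = i, N = (n-1)/2 when a = -i. Then there are exactly n - N real values θ in the interval [-(2n-1)π/(2n), -π/(2n)] satisfying e^{inθ} = -1/a. -/
open Complex Set

lemma count_aux (n : ℕ) (hn : 0 < n) (a : ℂ) (ha : ‖a‖ = 1) (k₁ k₂ : ℤ)
    (hiff : ∀ k : ℤ, (k₁ ≤ k ∧ k ≤ k₂) ↔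
      (-(2 * (n : ℝ) - 1) * Real.pi / (2 * n) ≤ (Real.pi - a.arg + k * (2 * Real.pi)) / n ∧
        (Real.pi - a.arg + k * (2 * Real.pi)) / n ≤ -Real.pi / (2 * n))) :
    {θ : ℝ | θ ∈ Icc (-(2 * (n : ℝ) - 1) * Real.pi / (2 * n)) (-Real.pi / (2 * n)) ∧
        Complex.exp (I * n * θ) = -1 / a}.ncard = (k₂ + 1 - k₁).toNat := by
  have hn0 : (n : ℝ) ≠ 0 := by positivity
  have hπ := Real.pi_pos
  have habs : ‖a‖ = 1 := ha
  have haexp : a = Complex.exp (a.arg * I) := by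
    conv_lhs => rw [← Complex.norm_mul_exp_arg_mul_I a]
    rw [habs, Complex.ofReal_one, one_mul]
  have hma : (-1 : ℂ) / a = Complex.exp ((↑Real.pi - ↑a.arg) * I) := by
    rw [show ((↑Real.pi - ↑a.arg) * I : ℂ) = ↑Real.pi * I + -(↑a.arg * I) by ring,
      Complex.exp_add, Complex.exp_pi_mul_I, Complex.exp_neg, ← haexp, div_eq_mul_inv]
  have hmem : ∀ θ : ℝ, Complex.exp (I * n * θ) = -1 / a ↔
      ∃ k : ℤ, (n : ℝ) * θ = Real.pi - a.arg + k * (2 * Real.pi) := by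
    intro θ
    rw [hma, Complex.exp_eq_exp_iff_exists_int]
    refine exists_congr fun k => ?_
    rw [show (I * ↑n * ↑θ : ℂ) = (((n : ℝ) * θ : ℝ) : ℂ) * I by push_cast; ring,
      show ((↑Real.pi - ↑a.arg) * I + ↑k * (2 * ↑Real.pi * I) : ℂ) =
        ((Real.pi - a.arg + k * (2 * Real.pi) : ℝ) : ℂ) * I by push_cast; ring,
      mul_left_inj' Complex.I_ne_zero, Complex.ofReal_inj]
  have himg : {θ : ℝ | θ ∈ Icc (-(2 * (n : ℝ) - 1) * Real.pi / (2 * n)) (-Real.pi / (2 * n)) ∧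
        Complex.exp (I * n * θ) = -1 / a} =
      (fun k : ℤ => (Real.pi - a.arg + k * (2 * Real.pi)) / n) '' (Set.Icc k₁ k₂) := by
    ext θ
    simp only [Set.mem_setOf_eq, Set.mem_Icc, Set.mem_image, hmem]
    constructor
    · rintro ⟨⟨h1, h2⟩, k, hk⟩
      have hθ : θ = (Real.pi - a.arg + k * (2 * Real.pi)) / n := by
        field_simp
        linarith [hk]
      refine ⟨k, (hiff k).mpr ?_, hθ.symm⟩
      rw [← hθ]; exact ⟨h1, h2⟩
    · rintro ⟨k, hk, rfl⟩
      obtain ⟨h1, h2⟩ := (hiff k).mp hk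
      exact ⟨⟨h1, h2⟩, k, by field_simp⟩
  have hinj : Function.Injective (fun k : ℤ => (Real.pi - a.arg + k * (2 * Real.pi)) / n) := by
    intro k k' h
    simp only at h
    field_simp at h
    have h' : (Real.pi * 2) * (k : ℝ) = (Real.pi * 2) * k' := by linarith
    exact_mod_cast mul_left_cancel₀ (by positivity) h'
  rw [himg, Set.ncard_image_of_injective _ hinj, ← Finset.coe_Icc, Set.ncard_coe_finset,
    Int.card_Icc]

theorem stmt0 (n N : ℕ) (hn : 2 ≤ n) (a : ℂ) (ha : ‖a‖ = 1)
    (heven : Even n → 0 ≤ a.re ∧ N = n / 2)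
    (hodd : Odd n → a.re = 0 ∧ (a = I → N = (n + 1) / 2) ∧ (a = -I → N = (n - 1) / 2)) :
    {θ : ℝ | θ ∈ Icc (-(2 * (n : ℝ) - 1) * Real.pi / (2 * n)) (-Real.pi / (2 * n)) ∧
        Complex.exp (I * n * θ) = -1 / a}.ncard = n - N := by
  have hπ := Real.pi_pos
  have hn0 : (0:ℝ) < (n:ℝ) := by positivity
  have h2n : (0:ℝ) < 2 * (n:ℝ) := by positivity
  have hXeq : ∀ x : ℝ, x / (n:ℝ) = (2 * x) / (2 * n) := by
    intro x; rw [mul_div_mul_left _ _ (two_ne_zero)]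
  rcases Nat.even_or_odd n with he | ho
  · obtain ⟨hre, hN⟩ := heven he
    have hα : |a.arg| ≤ Real.pi / 2 := Complex.abs_arg_le_pi_div_two_iff.mpr hre
    rw [abs_le] at hα
    obtain ⟨m, hm⟩ := he
    have hnm : (n : ℝ) = 2 * (m : ℝ) := by exact_mod_cast (by omega : n = 2 * m)
    rw [count_aux n (by omega) a ha (-(m : ℤ)) (-1) ?_]
    · omega
    intro k
    rw [hXeq, div_le_div_iff_of_pos_right h2n, div_le_div_iff_of_pos_right h2n]
    constructor
    · rintro ⟨hk1, hk2⟩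
      have hk1' : -(m : ℝ) ≤ k := by exact_mod_cast hk1
      have hk2' : (k : ℝ) ≤ -1 := by exact_mod_cast hk2
      have hm1 : Real.pi * (-(m:ℝ)) ≤ Real.pi * k := by
        exact mul_le_mul_of_nonneg_left hk1' hπ.le
      have hm2 : Real.pi * (k:ℝ) ≤ Real.pi * (-1) := by
        exact mul_le_mul_of_nonneg_left hk2' hπ.le
      constructor <;> nlinarith [hα.1, hα.2]
    · rintro ⟨h1, h2⟩
      have hk2' : (k : ℝ) ≤ -1/2 := by
        rw [← mul_le_mul_iff_of_pos_left hπ]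
        nlinarith [hα.2]
      have hk1' : -((n:ℝ) + 1) / 2 ≤ (k:ℝ) := by
        rw [← mul_le_mul_iff_of_pos_left hπ]
        nlinarith [hα.1]
      have hk2'' : (k : ℝ) < 0 := by linarith
      have hk2 : k < 0 := by exact_mod_cast hk2''
      have hk1 : -((n:ℤ) + 1) ≤ 2 * k := by
        have : -((n:ℝ) + 1) ≤ 2 * (k:ℝ) := by linarith
        exact_mod_cast this
      omega
  · obtain ⟨hre, hNI, hNnI⟩ := hodd ho
    obtain ⟨m, hm⟩ := ho
    have haI : a = I ∨ a = -I := by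
      have habs : ‖a‖ = 1 := ha
      have hsq : a.re * a.re + a.im * a.im = 1 := by
        have h := Complex.sq_norm a
        rw [habs, Complex.normSq_apply] at h
        simpa using h.symm
      rw [hre] at hsq
      have : a.im * a.im = 1 := by linarith
      rcases mul_self_eq_one_iff.mp this with h | h
      · left; apply Complex.ext <;> simp [hre, h]
      · right; apply Complex.ext <;> simp [hre, h]
    rcases haI with rfl | rfl
    · have hN := hNI rfl
      rw [count_aux n (by omega) I ha (-(m : ℤ)) (-1) ?_]
      · omega
      intro k
      rw [Complex.arg_I, hXeq, div_le_div_iff_of_pos_right h2n, div_le_div_iff_of_pos_right h2n]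
      have hnm : (n : ℝ) = 2 * (m : ℝ) + 1 := by exact_mod_cast (by omega : n = 2 * m + 1)
      constructor
      · rintro ⟨hk1, hk2⟩
        have hk1' : -(m : ℝ) ≤ k := by exact_mod_cast hk1
        have hk2' : (k : ℝ) ≤ -1 := by exact_mod_cast hk2
        have hm1 : Real.pi * (-(m:ℝ)) ≤ Real.pi * k :=
          mul_le_mul_of_nonneg_left hk1' hπ.le
        have hm2 : Real.pi * (k:ℝ) ≤ Real.pi * (-1) :=
          mul_le_mul_of_nonneg_left hk2' hπ.le
        constructor <;> nlinarith
      · rintro ⟨h1, h2⟩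
        have hk2' : (k : ℝ) ≤ -1/2 := by
          rw [← mul_le_mul_iff_of_pos_left hπ]
          nlinarith
        have hk1' : -(n:ℝ) / 2 ≤ (k:ℝ) := by
          rw [← mul_le_mul_iff_of_pos_left hπ]
          nlinarith
        have hk2'' : (k : ℝ) < 0 := by linarith
        have hk2 : k < 0 := by exact_mod_cast hk2''
        have hk1 : -(n:ℤ) ≤ 2 * k := by
          have : -(n:ℝ) ≤ 2 * (k:ℝ) := by linarith
          exact_mod_cast this
        omega
    · have hN := hNnI rfl
      rw [count_aux n (by omega) (-I) ha (-(m : ℤ) - 1) (-1) ?_]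
      · omega
      intro k
      rw [Complex.arg_neg_I, hXeq, div_le_div_iff_of_pos_right h2n, div_le_div_iff_of_pos_right h2n]
      have hnm : (n : ℝ) = 2 * (m : ℝ) + 1 := by exact_mod_cast (by omega : n = 2 * m + 1)
      constructor
      · rintro ⟨hk1, hk2⟩
        have hk1' : -(m : ℝ) - 1 ≤ k := by exact_mod_cast hk1
        have hk2' : (k : ℝ) ≤ -1 := by exact_mod_cast hk2
        have hm1 : Real.pi * (-(m:ℝ) - 1) ≤ Real.pi * k :=
          mul_le_mul_of_nonneg_left hk1' hπ.le
        have hm2 : Real.pi * (k:ℝ) ≤ Real.pi * (-1) :=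
          mul_le_mul_of_nonneg_left hk2' hπ.le
        constructor <;> nlinarith
      · rintro ⟨h1, h2⟩
        have hk2' : (k : ℝ) ≤ -1 := by
          rw [← mul_le_mul_iff_of_pos_left hπ]
          nlinarith
        have hk1' : -((n:ℝ) + 1) / 2 ≤ (k:ℝ) := by
          rw [← mul_le_mul_iff_of_pos_left hπ]
          nlinarith
        have hk2 : k ≤ -1 := by exact_mod_cast hk2'
        have hk1 : -((n:ℤ) + 1) ≤ 2 * k := by
          have : -((n:ℝ) + 1) ≤ 2 * (k:ℝ) := by linarith
          exact_mod_cast this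
        omega
end

section
/- Let n ≥ 2, T > t ≥ 0, and θ ∈ [-(2n-1)π/(2n), -π/(2n)]. Suppose φ and φ' are in L¹[0,∞). Then ∫_{-∞}^∞ e^{iρ(T-t)} φ̂( e^{iθ}(−iρ)^{1/n} ) dρ = 0, where φ̂(λ) = ∫₀^∞ e^{-iλx} φ(x) dx. -/
open Complex MeasureTheory Set Filter
open scoped Topology FourierTransform Real

namespace Stmt14Aux


noncomputable def Phi (φ : ℝ → ℂ) (l : ℂ) : ℂ :=
  ∫ x in Set.Ioi (0:ℝ), Complex.exp (-(I * l * x)) * φ x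

lemma norm_exp_aux (l : ℂ) (x : ℝ) : ‖Complex.exp (-(I * l * x))‖ = Real.exp (l.im * x) := by
  rw [Complex.norm_exp]
  congr 1
  simp [Complex.mul_re, Complex.mul_im]

variable {φ : ℝ → ℂ}

lemma meas_aux (hφ : IntegrableOn φ (Set.Ici 0)) (l : ℂ) :
    AEStronglyMeasurable (fun x : ℝ => Complex.exp (-(I * l * x)) * φ x)
      (volume.restrict (Set.Ioi 0)) := by
  have h1 : AEStronglyMeasurable φ (volume.restrict (Set.Ioi (0:ℝ))) :=
    hφ.aestronglyMeasurable.mono_measure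
      (Measure.restrict_mono Set.Ioi_subset_Ici_self le_rfl)
  exact (Complex.continuous_exp.comp (by fun_prop)).aestronglyMeasurable.mul h1

lemma integrable_aux (hφ : IntegrableOn φ (Set.Ici 0)) {l : ℂ} (hl : l.im ≤ 0) :
    IntegrableOn (fun x : ℝ => Complex.exp (-(I * l * x)) * φ x) (Set.Ioi 0) := by
  have hφ' : IntegrableOn (fun x => ‖φ x‖) (Set.Ioi (0:ℝ)) :=
    (hφ.mono_set Set.Ioi_subset_Ici_self).norm
  refine Integrable.mono' hφ' (meas_aux hφ l) ?_
  filter_upwards [ae_restrict_mem measurableSet_Ioi] with x hx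
  rw [norm_mul, norm_exp_aux]
  have : Real.exp (l.im * x) ≤ 1 := by
    rw [Real.exp_le_one_iff]
    exact mul_nonpos_of_nonpos_of_nonneg hl (le_of_lt hx)
  nlinarith [norm_nonneg (φ x)]

lemma norm_Phi_le (hφ : IntegrableOn φ (Set.Ici 0)) {l : ℂ} (hl : l.im ≤ 0) :
    ‖Phi φ l‖ ≤ ∫ x in Set.Ioi (0:ℝ), ‖φ x‖ := by
  refine norm_integral_le_of_norm_le ((hφ.mono_set Set.Ioi_subset_Ici_self).norm) ?_
  filter_upwards [ae_restrict_mem measurableSet_Ioi] with x hx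
  rw [norm_mul, norm_exp_aux]
  have : Real.exp (l.im * x) ≤ 1 := by
    rw [Real.exp_le_one_iff]
    exact mul_nonpos_of_nonpos_of_nonneg hl (le_of_lt hx)
  nlinarith [norm_nonneg (φ x)]

lemma continuousOn_Phi (hφ : IntegrableOn φ (Set.Ici 0)) :
    ContinuousOn (Phi φ) {l : ℂ | l.im ≤ 0} := by
  refine continuousOn_of_dominated (fun l hl => meas_aux hφ l) ?_
    ((hφ.mono_set Set.Ioi_subset_Ici_self).norm) ?_
  · intro l hl
    filter_upwards [ae_restrict_mem measurableSet_Ioi] with x hx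
    rw [norm_mul, norm_exp_aux]
    have : Real.exp (l.im * x) ≤ 1 := by
      rw [Real.exp_le_one_iff]
      exact mul_nonpos_of_nonpos_of_nonneg hl (le_of_lt hx)
    nlinarith [norm_nonneg (φ x)]
  · filter_upwards with x
    exact (Continuous.mul (by fun_prop) continuous_const).continuousOn

set_option maxHeartbeats 1000000 in
lemma differentiableAt_Phi (hφ : IntegrableOn φ (Set.Ici 0)) {l : ℂ} (hl : l.im < 0) :
    DifferentiableAt ℂ (Phi φ) l := by
  set c : ℝ := -l.im / 2 with hc
  have hcpos : 0 < c := by simp [hc]; linarith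
  have hmeas : ∀ᶠ m in 𝓝 l, AEStronglyMeasurable
      (fun x : ℝ => Complex.exp (-(I * m * x)) * φ x) (volume.restrict (Set.Ioi 0)) :=
    Filter.Eventually.of_forall (fun m => meas_aux hφ m)
  have hint : IntegrableOn (fun x : ℝ => Complex.exp (-(I * l * x)) * φ x) (Set.Ioi 0) :=
    integrable_aux hφ hl.le
  have h1 : AEStronglyMeasurable φ (volume.restrict (Set.Ioi (0:ℝ))) :=
    hφ.aestronglyMeasurable.mono_measure
      (Measure.restrict_mono Set.Ioi_subset_Ici_self le_rfl)
  have hmeas' : AEStronglyMeasurable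
      (fun x : ℝ => (Complex.exp (-(I * l * x)) * -(I * x)) * φ x)
      (volume.restrict (Set.Ioi 0)) := by
    have hc1 : Continuous (fun x : ℝ => Complex.exp (-(I * l * (x:ℂ))) * -(I * (x:ℂ))) := by
      fun_prop
    exact hc1.aestronglyMeasurable.mul h1
  have hboundint : Integrable (fun x : ℝ => c⁻¹ * ‖φ x‖) (volume.restrict (Set.Ioi 0)) :=
    ((hφ.mono_set Set.Ioi_subset_Ici_self).norm).const_mul _
  have h_bound : ∀ᵐ x : ℝ ∂(volume.restrict (Set.Ioi (0:ℝ))), ∀ m ∈ Metric.ball l c,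
      ‖(Complex.exp (-(I * m * x)) * -(I * x)) * φ x‖ ≤ c⁻¹ * ‖φ x‖ := by
    filter_upwards [ae_restrict_mem measurableSet_Ioi] with x hx m hm
    have him : m.im ≤ -c := by
      have h2 : ‖m - l‖ < c := by
        rwa [Metric.mem_ball, Complex.dist_eq] at hm
      have h3 : |m.im - l.im| < c := by
        have := Complex.abs_im_le_norm (m - l); simp only [Complex.sub_im] at this; linarith
      have := abs_lt.1 h3
      have hcl : c = -l.im / 2 := hc
      linarith [this.2]
    rw [norm_mul, norm_mul, norm_exp_aux]
    have h1' : ‖-(I * (x:ℂ))‖ = x := by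
      simp [_root_.abs_of_nonneg (Set.mem_Ioi.1 hx).le]
    rw [h1']
    have h2 : Real.exp (m.im * x) ≤ Real.exp (-c * x) :=
      Real.exp_le_exp.2 (by nlinarith [(Set.mem_Ioi.1 hx).le])
    have h3 : x * Real.exp (-c * x) ≤ c⁻¹ := by
      have h0 := Real.exp_pos (c*x)
      have h1'' := Real.add_one_le_exp (c*x)
      rw [show -c*x = -(c*x) by ring, Real.exp_neg, ← div_eq_mul_inv, ← one_div c,
        div_le_div_iff₀ h0 hcpos]
      nlinarith
    have h4 : x * Real.exp (m.im * x) ≤ c⁻¹ := by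
      have := mul_le_mul_of_nonneg_left h2 hx.le
      linarith
    have h5 := norm_nonneg (φ x)
    nlinarith [Real.exp_pos (m.im * x), (Set.mem_Ioi.1 hx).le]
  have h_diff : ∀ᵐ x : ℝ ∂(volume.restrict (Set.Ioi (0:ℝ))), ∀ m ∈ Metric.ball l c,
      HasDerivAt (fun m : ℂ => Complex.exp (-(I * m * x)) * φ x)
        ((Complex.exp (-(I * m * x)) * -(I * x)) * φ x) m := by
    filter_upwards with x m _
    have hd : HasDerivAt (fun m : ℂ => -(I * m * x)) (-(I * x)) m := by
      have h : HasDerivAt (fun m : ℂ => m * (-(I * x))) (-(I * x)) m := by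
        simpa using (hasDerivAt_id m).mul_const (-(I * (x:ℂ)))
      convert h using 2 with m
      ring
    exact (hd.cexp).mul_const (φ x)
  have key := hasDerivAt_integral_of_dominated_loc_of_deriv_le (Metric.ball_mem_nhds l hcpos) hmeas hint hmeas'
    h_bound hboundint h_diff
  exact key.2.differentiableAt



lemma ncinv (n : ℕ) : ((n:ℂ))⁻¹ = (((n:ℝ)⁻¹ : ℝ) : ℂ) := by push_cast; ring

lemma neg_I_mul_re (ρ : ℂ) : (-(I * ρ)).re = ρ.im := by simp

lemma lam_eq (n : ℕ) {ρ : ℂ} (hρ : ρ ≠ 0) :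
    ∀ θ : ℝ, Complex.exp (I * θ) * (-(I * ρ)) ^ (((n : ℂ))⁻¹) =
      Complex.exp (I * θ + Complex.log (-(I * ρ)) * ((n:ℂ))⁻¹) := by
  intro θ
  have hw : -(I * ρ) ≠ 0 := by
    simp [I_ne_zero, hρ]
  rw [Complex.cpow_def_of_ne_zero hw, ← Complex.exp_add]

lemma im_aux (n : ℕ) {ρ : ℂ} (hρ : ρ ≠ 0) (θ : ℝ) :
    (Complex.exp (I * θ) * (-(I * ρ)) ^ (((n : ℂ))⁻¹)).im =
      Real.exp ((I * θ + Complex.log (-(I * ρ)) * ((n:ℂ))⁻¹).re) *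
        Real.sin (θ + Complex.arg (-(I * ρ)) * (n:ℝ)⁻¹) := by
  rw [lam_eq n hρ θ, Complex.exp_im]
  congr 2
  rw [ncinv]
  simp [Complex.add_im, Complex.mul_im, Complex.log_im]

lemma sin_bounds (n : ℕ) (hn : 2 ≤ n) {θ : ℝ}
    (hθ1 : -(2 * (n : ℝ) - 1) * Real.pi / (2 * n) ≤ θ) (hθ2 : θ ≤ -Real.pi / (2 * n))
    {a : ℝ} (ha : |a| ≤ Real.pi / 2) :
    -Real.pi ≤ θ + a * (n:ℝ)⁻¹ ∧ θ + a * (n:ℝ)⁻¹ ≤ 0 := by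
  have hN : (2:ℝ) ≤ n := by exact_mod_cast hn
  have hN0 : (0:ℝ) < n := by linarith
  have hπ := Real.pi_pos
  have ha' := abs_le.1 ha
  have h1 : a * (n:ℝ)⁻¹ ≥ (-(Real.pi/2)) * (n:ℝ)⁻¹ :=
    mul_le_mul_of_nonneg_right (by linarith [ha'.1]) (by positivity)
  have h2 : a * (n:ℝ)⁻¹ ≤ (Real.pi/2) * (n:ℝ)⁻¹ :=
    mul_le_mul_of_nonneg_right (by linarith [ha'.2]) (by positivity)
  constructor
  · have key : -(2 * (n : ℝ) - 1) * Real.pi / (2 * n) + (-(Real.pi/2)) * (n:ℝ)⁻¹ = -Real.pi := by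
      field_simp
      ring
    linarith
  · have key : -Real.pi / (2 * n) + (Real.pi/2) * (n:ℝ)⁻¹ = 0 := by
      field_simp
      ring
    linarith

lemma im_lam_nonpos (n : ℕ) (hn : 2 ≤ n) {θ : ℝ}
    (hθ1 : -(2 * (n : ℝ) - 1) * Real.pi / (2 * n) ≤ θ) (hθ2 : θ ≤ -Real.pi / (2 * n))
    {ρ : ℂ} (hρ : 0 ≤ ρ.im) :
    (Complex.exp (I * θ) * (-(I * ρ)) ^ (((n : ℂ))⁻¹)).im ≤ 0 := by
  rcases eq_or_ne ρ 0 with rfl | hρ0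
  · have hn0 : ((n:ℂ))⁻¹ ≠ 0 := by
      simp
      omega
    simp [Complex.zero_cpow hn0]
  · rw [im_aux n hρ0 θ]
    have ha : |Complex.arg (-(I * ρ))| ≤ Real.pi / 2 :=
      Complex.abs_arg_le_pi_div_two_iff.2 (by rw [neg_I_mul_re]; exact hρ)
    obtain ⟨hb1, hb2⟩ := sin_bounds n hn hθ1 hθ2 ha
    have := Real.sin_nonpos_of_nonpos_of_neg_pi_le hb2 hb1
    have hexp := Real.exp_pos ((I * θ + Complex.log (-(I * ρ)) * ((n:ℂ))⁻¹).re)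
    nlinarith

lemma im_lam_neg (n : ℕ) (hn : 2 ≤ n) {θ : ℝ}
    (hθ1 : -(2 * (n : ℝ) - 1) * Real.pi / (2 * n) ≤ θ) (hθ2 : θ ≤ -Real.pi / (2 * n))
    {ρ : ℂ} (hρ : 0 < ρ.im) :
    (Complex.exp (I * θ) * (-(I * ρ)) ^ (((n : ℂ))⁻¹)).im < 0 := by
  have hρ0 : ρ ≠ 0 := by
    intro h; rw [h] at hρ; simp at hρ
  rw [im_aux n hρ0 θ]
  have ha : |Complex.arg (-(I * ρ))| < Real.pi / 2 :=
    Complex.abs_arg_lt_pi_div_two_iff.2 (Or.inl (by rw [neg_I_mul_re]; exact hρ))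
  have hN : (2:ℝ) ≤ n := by exact_mod_cast hn
  have hN0 : (0:ℝ) < n := by linarith
  have hπ := Real.pi_pos
  have ha' := abs_lt.1 ha
  set a := Complex.arg (-(I * ρ))
  have h1 : a * (n:ℝ)⁻¹ > (-(Real.pi/2)) * (n:ℝ)⁻¹ :=
    mul_lt_mul_of_pos_right (by linarith [ha'.1]) (by positivity)
  have h2 : a * (n:ℝ)⁻¹ < (Real.pi/2) * (n:ℝ)⁻¹ :=
    mul_lt_mul_of_pos_right (by linarith [ha'.2]) (by positivity)
  have key1 : -(2 * (n : ℝ) - 1) * Real.pi / (2 * n) + (-(Real.pi/2)) * (n:ℝ)⁻¹ = -Real.pi := by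
    field_simp
    ring
  have key2 : -Real.pi / (2 * n) + (Real.pi/2) * (n:ℝ)⁻¹ = 0 := by
    field_simp
    ring
  have hb1 : -Real.pi < θ + a * (n:ℝ)⁻¹ := by linarith
  have hb2 : θ + a * (n:ℝ)⁻¹ < 0 := by linarith
  have hsin := Real.sin_neg_of_neg_of_neg_pi_lt hb2 hb1
  have hexp := Real.exp_pos ((I * θ + Complex.log (-(I * ρ)) * ((n:ℂ))⁻¹).re)
  nlinarith

lemma abs_lam (n : ℕ) (hn : 2 ≤ n) (θ : ℝ) {ρ : ℂ} (hρ : ρ ≠ 0) :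
    ‖Complex.exp (I * θ) * (-(I * ρ)) ^ (((n : ℂ))⁻¹)‖ =
      ‖ρ‖ ^ ((n:ℝ)⁻¹) := by
  have hw : -(I * ρ) ≠ 0 := by simp [I_ne_zero, hρ]
  rw [norm_mul, Complex.norm_cpow_of_ne_zero hw]
  have h1 : ‖Complex.exp (I * θ)‖ = 1 := by
    rw [Complex.norm_exp]
    simp
  have h2 : ‖-(I * ρ)‖ = ‖ρ‖ := by
    simp
  rw [h1, h2, ncinv]
  simp





lemma tail_small (hφ : IntegrableOn φ (Set.Ici 0)) {ε : ℝ} (hε : 0 < ε) :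
    ∃ M : ℝ, 1 ≤ M ∧ ∫ x in Set.Ioi M, ‖φ x‖ ≤ ε := by
  have hint : IntegrableOn (fun x => ‖φ x‖) (Set.Ioi (0:ℝ)) :=
    (hφ.mono_set Set.Ioi_subset_Ici_self).norm
  have hU : (⋃ k : ℕ, Set.Ioc (0:ℝ) (k:ℝ)) = Set.Ioi (0:ℝ) := by
    ext x
    simp only [Set.mem_iUnion, Set.mem_Ioc, Set.mem_Ioi]
    constructor
    · rintro ⟨k, hk, -⟩; exact hk
    · intro hx
      obtain ⟨k, hk⟩ := exists_nat_ge x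
      exact ⟨k, hx, hk⟩
  have hmono : Monotone (fun k : ℕ => Set.Ioc (0:ℝ) (k:ℝ)) := by
    intro i j hij
    exact Set.Ioc_subset_Ioc le_rfl (by exact_mod_cast hij)
  have htendsto := tendsto_setIntegral_of_monotone (fun k : ℕ => measurableSet_Ioc) hmono
    (by rw [hU]; exact hint)
  rw [hU] at htendsto
  have := htendsto.eventually (eventually_ge_nhds
    (show (∫ x in Set.Ioi (0:ℝ), ‖φ x‖) - ε < ∫ x in Set.Ioi (0:ℝ), ‖φ x‖ by linarith))
  obtain ⟨k, hk⟩ := (this.and (eventually_ge_atTop 1)).exists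
  refine ⟨max (k:ℝ) 1, le_max_right _ _, ?_⟩
  have hsub : Set.Ioi (max (k:ℝ) 1) ⊆ Set.Ioi (0:ℝ) := by
    intro x hx
    simp only [Set.mem_Ioi] at *
    have : (1:ℝ) ≤ max (k:ℝ) 1 := le_max_right _ _
    linarith
  have hsplit : ∫ x in Set.Ioi (0:ℝ), ‖φ x‖ =
      (∫ x in Set.Ioc (0:ℝ) (max (k:ℝ) 1), ‖φ x‖) + ∫ x in Set.Ioi (max (k:ℝ) 1), ‖φ x‖ := by
    rw [← setIntegral_union (Set.Ioc_disjoint_Ioi le_rfl) measurableSet_Ioi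
      (hint.mono_set Set.Ioc_subset_Ioi_self) (hint.mono_set hsub),
      Set.Ioc_union_Ioi_eq_Ioi (by positivity)]
  have hmono2 : (∫ x in Set.Ioc (0:ℝ) (k:ℝ), ‖φ x‖) ≤
      ∫ x in Set.Ioc (0:ℝ) (max (k:ℝ) 1), ‖φ x‖ := by
    refine setIntegral_mono_set (hint.mono_set Set.Ioc_subset_Ioi_self) ?_ ?_
    · filter_upwards with x using norm_nonneg _
    · exact HasSubset.Subset.eventuallyLE (Set.Ioc_subset_Ioc le_rfl (le_max_left _ _))
  linarith [hk.1]

lemma exp_decay_small (hφ : IntegrableOn φ (Set.Ici 0)) {ε : ℝ} (hε : 0 < ε) :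
    ∃ B : ℝ, 1 ≤ B ∧ ∀ b : ℝ, b ≤ -B →
      ∫ x in Set.Ioi (0:ℝ), Real.exp (b * x) * ‖φ x‖ ≤ ε := by
  have hint : IntegrableOn (fun x => ‖φ x‖) (Set.Ioi (0:ℝ)) :=
    (hφ.mono_set Set.Ioi_subset_Ici_self).norm
  have hintb : ∀ b : ℝ, b ≤ 0 →
      IntegrableOn (fun x => Real.exp (b * x) * ‖φ x‖) (Set.Ioi (0:ℝ)) := by
    intro b hb
    refine Integrable.mono' hint ?_ ?_
    · exact ((Real.continuous_exp.comp (continuous_const.mul continuous_id)).aestronglyMeasurable.mul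
        hint.aestronglyMeasurable)
    · filter_upwards [ae_restrict_mem measurableSet_Ioi] with x hx
      rw [Real.norm_eq_abs, _root_.abs_of_nonneg (by positivity)]
      have h1 : Real.exp (b * x) ≤ 1 := by
        rw [Real.exp_le_one_iff]
        exact mul_nonpos_of_nonpos_of_nonneg hb hx.le
      nlinarith [norm_nonneg (φ x)]
  have hDCT : Tendsto (fun k : ℕ => ∫ x in Set.Ioi (0:ℝ), Real.exp (-(k:ℝ) * x) * ‖φ x‖)
      atTop (𝓝 (∫ x in Set.Ioi (0:ℝ), (0:ℝ))) := by
    refine tendsto_integral_of_dominated_convergence (fun x => ‖φ x‖)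
      (fun k => (hintb (-(k:ℝ)) (neg_nonpos.2 (Nat.cast_nonneg k))).aestronglyMeasurable) hint ?_ ?_
    · intro k
      filter_upwards [ae_restrict_mem measurableSet_Ioi] with x hx
      rw [Real.norm_eq_abs, _root_.abs_of_nonneg (by positivity)]
      have h1 : Real.exp (-(k:ℝ) * x) ≤ 1 := by
        rw [Real.exp_le_one_iff]
        exact mul_nonpos_of_nonpos_of_nonneg (neg_nonpos.2 (Nat.cast_nonneg k)) hx.le
      nlinarith [norm_nonneg (φ x)]
    · filter_upwards [ae_restrict_mem measurableSet_Ioi] with x hx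
      have : Tendsto (fun k : ℕ => Real.exp (-(k:ℝ) * x)) atTop (𝓝 0) := by
        apply Real.tendsto_exp_atBot.comp
        apply Tendsto.atBot_mul_const hx
        exact tendsto_neg_atBot_iff.2 tendsto_natCast_atTop_atTop
      simpa using this.mul_const ‖φ x‖
  rw [integral_zero] at hDCT
  have := hDCT.eventually (eventually_le_nhds hε)
  obtain ⟨k, hk⟩ := (this.and (eventually_ge_atTop 1)).exists
  refine ⟨(k:ℝ), by exact_mod_cast hk.2, fun b hb => ?_⟩
  calc ∫ x in Set.Ioi (0:ℝ), Real.exp (b * x) * ‖φ x‖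
      ≤ ∫ x in Set.Ioi (0:ℝ), Real.exp (-(k:ℝ) * x) * ‖φ x‖ := by
        have hk1 : (1:ℝ) ≤ (k:ℝ) := by exact_mod_cast hk.2
        refine setIntegral_mono_on (hintb b (by linarith))
          (hintb (-(k:ℝ)) (neg_nonpos.2 (Nat.cast_nonneg k))) measurableSet_Ioi ?_
        intro x hx
        have : Real.exp (b * x) ≤ Real.exp (-(k:ℝ) * x) :=
          Real.exp_le_exp.2 (by nlinarith [Set.mem_Ioi.1 hx])
        nlinarith [norm_nonneg (φ x)]
    _ ≤ ε := hk.1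

lemma RL (hφ : IntegrableOn φ (Set.Ici 0)) {b : ℝ} (hb : b ≤ 0) :
    Tendsto (fun a : ℝ => Phi φ ((a:ℂ) + (b:ℂ) * I)) (cocompact ℝ) (𝓝 0) := by
  set g : ℝ → ℂ := Set.indicator (Set.Ioi 0) (fun x => Complex.exp ((b:ℂ) * x) * φ x) with hg
  have key : ∀ w : ℝ, 𝓕 g w = Phi φ ((2 * π * w : ℝ) + (b:ℂ) * I) := by
    intro w
    rw [Real.fourier_real_eq_integral_exp_smul]
    have : (fun v : ℝ => Complex.exp (↑(-2 * π * v * w) * I) • g v) =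
        Set.indicator (Set.Ioi 0)
          (fun v : ℝ => Complex.exp (-(I * (((2 * π * w : ℝ) : ℂ) + (b:ℂ) * I) * v)) * φ v) := by
      funext v
      by_cases hv : v ∈ Set.Ioi (0:ℝ)
      · rw [hg]
        simp only [Set.indicator_of_mem hv, smul_eq_mul]
        rw [← mul_assoc, ← Complex.exp_add]
        congr 2
        push_cast
        linear_combination (↑v * ↑b : ℂ) * Complex.I_mul_I
      · rw [hg]
        simp [Set.indicator_of_notMem hv]
    rw [this, integral_indicator measurableSet_Ioi]
    rfl
  have hdiv : Tendsto (fun a : ℝ => a / (2 * π)) (cocompact ℝ) (cocompact ℝ) := by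
    rw [cocompact_eq_atBot_atTop]
    have h2π : (0:ℝ) < 2 * π := by positivity
    refine Filter.Tendsto.sup_sup ?_ ?_
    · exact (Filter.tendsto_id.atBot_div_const h2π)
    · exact (Filter.tendsto_id.atTop_div_const h2π)
  have := (Real.zero_at_infty_fourier g).comp hdiv
  refine this.congr fun a => ?_
  simp only [Function.comp_apply, key]
  congr 3
  push_cast
  field_simp

lemma meas_aux' (hφ : IntegrableOn φ (Set.Ici 0)) (l : ℂ) :
    AEStronglyMeasurable (fun x : ℝ => Complex.exp (-(I * l * x)) * φ x)
      (volume.restrict (Set.Ioi 0)) := by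
  have h1 : AEStronglyMeasurable φ (volume.restrict (Set.Ioi (0:ℝ))) :=
    hφ.aestronglyMeasurable.mono_measure
      (Measure.restrict_mono Set.Ioi_subset_Ici_self le_rfl)
  exact (Complex.continuous_exp.comp (by fun_prop)).aestronglyMeasurable.mul h1

lemma norm_exp_aux' (l : ℂ) (x : ℝ) : ‖Complex.exp (-(I * l * x))‖ = Real.exp (l.im * x) := by
  rw [Complex.norm_exp]
  congr 1
  simp [Complex.mul_re, Complex.mul_im]

lemma integrable_aux' (hφ : IntegrableOn φ (Set.Ici 0)) {l : ℂ} (hl : l.im ≤ 0) :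
    IntegrableOn (fun x : ℝ => Complex.exp (-(I * l * x)) * φ x) (Set.Ioi 0) := by
  have hφ' : IntegrableOn (fun x => ‖φ x‖) (Set.Ioi (0:ℝ)) :=
    (hφ.mono_set Set.Ioi_subset_Ici_self).norm
  refine Integrable.mono' hφ' (meas_aux' hφ l) ?_
  filter_upwards [ae_restrict_mem measurableSet_Ioi] with x hx
  rw [norm_mul, norm_exp_aux']
  have : Real.exp (l.im * x) ≤ 1 := by
    rw [Real.exp_le_one_iff]
    exact mul_nonpos_of_nonpos_of_nonneg hl (le_of_lt hx)
  nlinarith [norm_nonneg (φ x)]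

lemma norm_Phi_le_exp (hφ : IntegrableOn φ (Set.Ici 0)) {l : ℂ} (hl : l.im ≤ 0) :
    ‖Phi φ l‖ ≤ ∫ x in Set.Ioi (0:ℝ), Real.exp (l.im * x) * ‖φ x‖ := by
  have hint : IntegrableOn (fun x => ‖φ x‖) (Set.Ioi (0:ℝ)) :=
    (hφ.mono_set Set.Ioi_subset_Ici_self).norm
  refine norm_integral_le_of_norm_le ?_ ?_
  · refine Integrable.mono' hint ?_ ?_
    · exact ((Real.continuous_exp.comp (continuous_const.mul continuous_id)).aestronglyMeasurable.mul
        hint.aestronglyMeasurable)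
    · filter_upwards [ae_restrict_mem measurableSet_Ioi] with x hx
      rw [Real.norm_eq_abs, _root_.abs_of_nonneg (by positivity)]
      have h1 : Real.exp (l.im * x) ≤ 1 := by
        rw [Real.exp_le_one_iff]
        exact mul_nonpos_of_nonpos_of_nonneg hl hx.le
      nlinarith [norm_nonneg (φ x)]
  · filter_upwards with x
    rw [norm_mul, norm_exp_aux']

lemma real_exp_diff_le {u v : ℝ} (hu : u ≤ 0) (hv : v ≤ 0) :
    |Real.exp u - Real.exp v| ≤ min |u - v| 1 := by
  have key : ∀ u v : ℝ, u ≤ 0 → v ≤ 0 → v ≤ u →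
      Real.exp u - Real.exp v ≤ min |u - v| 1 := by
    intro u v hu hv hvu
    have h1 : Real.exp u ≤ 1 := Real.exp_le_one_iff.2 hu
    have h2 : 0 < Real.exp v := Real.exp_pos v
    have h3 : Real.exp v = Real.exp u * Real.exp (v - u) := by
      rw [← Real.exp_add]; ring_nf
    have h4 := Real.add_one_le_exp (v - u)
    have h5 : Real.exp u - Real.exp v ≤ u - v := by
      rw [h3]
      have h6 : Real.exp u * (1 - Real.exp (v - u)) ≤ 1 * (1 - Real.exp (v - u)) := by
        apply mul_le_mul_of_nonneg_right h1
        nlinarith [Real.exp_le_one_iff.2 (show v - u ≤ 0 by linarith)]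
      nlinarith
    have h7 : |u - v| = u - v := _root_.abs_of_nonneg (by linarith)
    refine le_min (by linarith) (by nlinarith)
  rcases le_total v u with h | h
  · have := key u v hu hv h
    have hnn : 0 ≤ Real.exp u - Real.exp v := by
      have := Real.exp_le_exp.2 h; linarith
    rwa [_root_.abs_of_nonneg hnn]
  · have := key v u hv hu h
    have hnn : 0 ≤ Real.exp v - Real.exp u := by
      have := Real.exp_le_exp.2 h; linarith
    rw [← neg_sub, abs_neg, _root_.abs_of_nonneg hnn]
    rwa [abs_sub_comm] at this

lemma norm_exp_diff (a b b' : ℝ) (hb : b ≤ 0) (hb' : b' ≤ 0) {x : ℝ} (hx : 0 ≤ x) :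
    ‖Complex.exp (-(I * ((a:ℂ) + (b:ℂ) * I) * x)) - Complex.exp (-(I * ((a:ℂ) + (b':ℂ) * I) * x))‖
      ≤ min (|b - b'| * x) 1 := by
  have factor : ∀ c : ℝ, c ≤ 0 → Complex.exp (-(I * ((a:ℂ) + (c:ℂ) * I) * x)) =
      ((Real.exp (c * x) : ℝ) : ℂ) * Complex.exp (-(I * (a:ℂ) * x)) := by
    intro c _
    rw [Complex.ofReal_exp, ← Complex.exp_add]
    congr 1
    push_cast
    linear_combination (-(↑c * ↑x) : ℂ) * Complex.I_mul_I
  rw [factor b hb, factor b' hb', ← sub_mul, norm_mul, norm_exp_aux']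
  simp only [Complex.ofReal_im, zero_mul, Real.exp_zero, mul_one]
  rw [← Complex.ofReal_sub, Complex.norm_real]
  have h1 := real_exp_diff_le (mul_nonpos_of_nonpos_of_nonneg hb hx)
    (mul_nonpos_of_nonpos_of_nonneg hb' hx)
  have h2 : |b * x - b' * x| = |b - b'| * x := by
    rw [show b * x - b' * x = (b - b') * x by ring, abs_mul, _root_.abs_of_nonneg hx]
  rw [Real.norm_eq_abs]
  calc |Real.exp (b * x) - Real.exp (b' * x)| ≤ min |b * x - b' * x| 1 := h1
    _ ≤ min (|b - b'| * x) 1 := by rw [h2]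

lemma Phi_diff_bound (hφ : IntegrableOn φ (Set.Ici 0)) {a b b' M : ℝ}
    (hb : b ≤ 0) (hb' : b' ≤ 0) (hM : 0 ≤ M) :
    ‖Phi φ ((a:ℂ) + (b:ℂ) * I) - Phi φ ((a:ℂ) + (b':ℂ) * I)‖ ≤
      |b - b'| * M * (∫ x in Set.Ioi (0:ℝ), ‖φ x‖) + ∫ x in Set.Ioi M, ‖φ x‖ := by
  have him : ((a:ℂ) + (b:ℂ) * I).im = b := by simp
  have him' : ((a:ℂ) + (b':ℂ) * I).im = b' := by simp
  have hint1 := integrable_aux' hφ (l := (a:ℂ) + (b:ℂ) * I) (by rw [him]; exact hb)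
  have hint2 := integrable_aux' hφ (l := (a:ℂ) + (b':ℂ) * I) (by rw [him']; exact hb')
  have hnorm : IntegrableOn (fun x => ‖φ x‖) (Set.Ioi (0:ℝ)) :=
    (hφ.mono_set Set.Ioi_subset_Ici_self).norm
  have hnormM : IntegrableOn (fun x => ‖φ x‖) (Set.Ioi M) :=
    hnorm.mono_set (Set.Ioi_subset_Ioi hM)
  rw [Phi, Phi, ← integral_sub hint1 hint2]
  have step1 : ‖∫ x in Set.Ioi (0:ℝ), (Complex.exp (-(I * ((a:ℂ) + (b:ℂ) * I) * x)) * φ x -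
      Complex.exp (-(I * ((a:ℂ) + (b':ℂ) * I) * x)) * φ x)‖ ≤
      ∫ x in Set.Ioi (0:ℝ),
        ‖Complex.exp (-(I * ((a:ℂ) + (b:ℂ) * I) * x)) -
          Complex.exp (-(I * ((a:ℂ) + (b':ℂ) * I) * x))‖ * ‖φ x‖ := by
    refine norm_integral_le_of_norm_le ?_ ?_
    · have := (hint1.sub hint2).norm
      refine this.congr ?_
      filter_upwards with x
      simp only [Pi.sub_apply]
      rw [← sub_mul, norm_mul]
    · filter_upwards with x
      rw [← sub_mul, norm_mul]
  refine step1.trans ?_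
  set D : ℝ → ℝ := fun x =>
    ‖Complex.exp (-(I * ((a:ℂ) + (b:ℂ) * I) * x)) -
      Complex.exp (-(I * ((a:ℂ) + (b':ℂ) * I) * x))‖ * ‖φ x‖ with hD
  have hDint : IntegrableOn D (Set.Ioi (0:ℝ)) := by
    have := (hint1.sub hint2).norm
    refine this.congr ?_
    filter_upwards with x
    simp only [Pi.sub_apply]
    rw [← sub_mul, norm_mul]
  have hsplit : ∫ x in Set.Ioi (0:ℝ), D x =
      (∫ x in Set.Ioc (0:ℝ) M, D x) + ∫ x in Set.Ioi M, D x := by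
    rw [← setIntegral_union (Set.Ioc_disjoint_Ioi le_rfl) measurableSet_Ioi
      (hDint.mono_set Set.Ioc_subset_Ioi_self)
      (hDint.mono_set (fun x hx => by simp only [Set.mem_Ioi] at *; linarith)),
      Set.Ioc_union_Ioi_eq_Ioi hM]
  rw [hsplit]
  have hbound1 : (∫ x in Set.Ioc (0:ℝ) M, D x) ≤
      |b - b'| * M * ∫ x in Set.Ioi (0:ℝ), ‖φ x‖ := by
    have : (∫ x in Set.Ioc (0:ℝ) M, D x) ≤ ∫ x in Set.Ioc (0:ℝ) M, |b - b'| * M * ‖φ x‖ := by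
      refine setIntegral_mono_on (hDint.mono_set Set.Ioc_subset_Ioi_self)
        ((hnorm.mono_set Set.Ioc_subset_Ioi_self).const_mul _) measurableSet_Ioc ?_
      intro x hx
      have h1 := norm_exp_diff a b b' hb hb' (le_of_lt hx.1)
      have h2 : min (|b - b'| * x) 1 ≤ |b - b'| * M := by
        refine (min_le_left _ _).trans ?_
        exact mul_le_mul_of_nonneg_left hx.2 (abs_nonneg _)
      have h3 := norm_nonneg (φ x)
      calc _ ≤ (|b - b'| * M) * ‖φ x‖ :=
            mul_le_mul_of_nonneg_right (h1.trans h2) h3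
        _ = |b - b'| * M * ‖φ x‖ := by ring
    refine this.trans ?_
    rw [integral_const_mul]
    refine mul_le_mul_of_nonneg_left ?_ (by positivity)
    refine setIntegral_mono_set hnorm ?_ ?_
    · filter_upwards with x using norm_nonneg _
    · exact HasSubset.Subset.eventuallyLE Set.Ioc_subset_Ioi_self
  have hbound2 : (∫ x in Set.Ioi M, D x) ≤ ∫ x in Set.Ioi M, ‖φ x‖ := by
    refine setIntegral_mono_on
      (hDint.mono_set (fun x hx => by simp only [Set.mem_Ioi] at *; linarith))
      hnormM measurableSet_Ioi ?_
    intro x hx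
    have h1 := norm_exp_diff a b b' hb hb' (le_of_lt (lt_of_le_of_lt hM hx))
    have h2 : min (|b - b'| * x) 1 ≤ 1 := min_le_right _ _
    have h3 := norm_nonneg (φ x)
    have : D x ≤ 1 * ‖φ x‖ := mul_le_mul_of_nonneg_right (h1.trans h2) h3
    simpa using this
  linarith

set_option maxHeartbeats 1000000 in
lemma decay (hφ : IntegrableOn φ (Set.Ici 0)) {ε : ℝ} (hε : 0 < ε) :
    ∃ r : ℝ, 1 ≤ r ∧ ∀ l : ℂ, l.im ≤ 0 → r ≤ ‖l‖ → ‖Phi φ l‖ ≤ ε := by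
  have hε4 : 0 < ε / 4 := by linarith
  obtain ⟨M, hM1, hMtail⟩ := tail_small hφ hε4
  obtain ⟨B, hB1, hBexp⟩ := exp_decay_small hφ hε4
  set C : ℝ := ∫ x in Set.Ioi (0:ℝ), ‖φ x‖ with hCdef
  have hC : 0 ≤ C := setIntegral_nonneg measurableSet_Ioi (fun x _ => norm_nonneg _)
  set m : ℕ := ⌈B * M * (C + 1) / (ε / 4)⌉₊ + 1 with hmdef
  have hm0 : 0 < m := Nat.succ_pos _
  have hmR : (0:ℝ) < m := Nat.cast_pos.2 hm0
  have hmkey : B * M * (C + 1) ≤ (ε / 4) * m := by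
    have h1 : B * M * (C + 1) / (ε / 4) ≤ (⌈B * M * (C + 1) / (ε / 4)⌉₊ : ℝ) := Nat.le_ceil _
    have h2 : ((⌈B * M * (C + 1) / (ε / 4)⌉₊ : ℝ)) ≤ (m:ℝ) := by
      rw [hmdef]; push_cast; linarith
    rw [div_le_iff₀ hε4] at h1
    nlinarith
  set bj : ℕ → ℝ := fun j => -((j:ℝ) * B / m) with hbjdef
  have hbj : ∀ j, bj j ≤ 0 := by
    intro j
    rw [hbjdef]
    simp only [neg_nonpos]
    positivity
  have E : ∀ᶠ a : ℝ in cocompact ℝ, ∀ j ∈ Finset.range (m+1),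
      ‖Phi φ ((a:ℂ) + (bj j : ℝ) * I)‖ ≤ ε / 4 := by
    rw [eventually_all_finset]
    intro j _
    have := NormedAddCommGroup.tendsto_nhds_zero.mp (RL hφ (hbj j)) (ε/4) hε4
    exact this.mono (fun a ha => le_of_lt ha)
  rw [cocompact_eq_atBot_atTop, eventually_sup] at E
  obtain ⟨A₂, hA₂⟩ := eventually_atBot.1 E.1
  obtain ⟨A₁, hA₁⟩ := eventually_atTop.1 E.2
  set K : ℝ := max (max A₁ (-A₂)) (max B 1) + 1 with hKdef
  have hK1 : 1 ≤ K := by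
    have : (1:ℝ) ≤ max B 1 := le_max_right _ _
    have h2 : max B 1 ≤ max (max A₁ (-A₂)) (max B 1) := le_max_right _ _
    linarith
  refine ⟨2 * K, by linarith, ?_⟩
  intro l him hr
  set a : ℝ := l.re with hadef
  set b : ℝ := l.im with hbdef
  have hlrw : l = (a:ℂ) + (b:ℂ) * I := (Complex.re_add_im l).symm
  have hbBcase : ∀ hb' : b ≤ -B, ‖Phi φ l‖ ≤ ε := by
    intro hb'
    have h1 := norm_Phi_le_exp hφ (l := l) him
    have h2 := hBexp b hb'
    have : l.im = b := rfl
    rw [this] at h1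
    linarith
  have habs : K ≤ |a| ∨ K ≤ |b| := by
    by_contra hcon
    push_neg at hcon
    have := Complex.norm_le_abs_re_add_abs_im l
    rw [← hadef, ← hbdef] at this
    have : ‖l‖ < 2 * K := by linarith [hcon.1, hcon.2]
    linarith
  rcases habs with hA | hB
  · -- |a| large
    by_cases hb' : b ≤ -B
    · exact hbBcase hb'
    · push_neg at hb'
      set j : ℕ := ⌊(-b) * m / B⌋₊ with hjdef
      have hBpos : (0:ℝ) < B := by linarith
      have hbneg : 0 ≤ -b := by rw [hbdef]; linarith [him]
      have hfl : (0:ℝ) ≤ (-b) * m / B := by positivity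
      have hj_le : (j:ℝ) ≤ (-b) * m / B := Nat.floor_le hfl
      have hj_lt : (-b) * m / B < (j:ℝ) + 1 := Nat.lt_floor_add_one _
      have hj_le' : (j:ℝ) * B / m ≤ -b := by
        rw [div_le_iff₀ hmR]
        have h := (le_div_iff₀ hBpos).1 hj_le
        nlinarith
      have hj_lt' : -b < ((j:ℝ) + 1) * B / m := by
        rw [div_lt_iff₀ hBpos] at hj_lt
        rw [lt_div_iff₀ hmR]
        nlinarith
      have hj_mem : j ∈ Finset.range (m + 1) := by
        rw [Finset.mem_range]
        have : (j:ℝ) ≤ m := by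
          refine hj_le.trans ?_
          rw [div_le_iff₀ hBpos]
          have : -b < B := by linarith
          nlinarith
        exact_mod_cast Nat.lt_succ_of_le (by exact_mod_cast this)
      have hdiffb : |b - bj j| ≤ B / m := by
        rw [hbjdef]
        simp only
        rw [abs_le]
        have hBm : (0:ℝ) ≤ B / m := by positivity
        constructor
        · have : ((j:ℝ) + 1) * B / m = (j:ℝ) * B / m + B / m := by ring
          nlinarith [hj_lt']
        · linarith [hj_le']
      have hnet : ‖Phi φ ((a:ℂ) + (bj j : ℝ) * I)‖ ≤ ε / 4 := by
        rcases le_or_gt 0 a with ha0 | ha0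
        · refine hA₁ a ?_ j hj_mem
          have : |a| = a := _root_.abs_of_nonneg ha0
          have hK' : max A₁ (-A₂) ≤ K - 1 := by rw [hKdef]; simp [le_max_left]
          have : A₁ ≤ K - 1 := le_trans (le_max_left _ _) hK'
          linarith [hA]
        · refine hA₂ a ?_ j hj_mem
          have : |a| = -a := abs_of_neg ha0
          have hK' : max A₁ (-A₂) ≤ K - 1 := by rw [hKdef]; simp [le_max_left]
          have : -A₂ ≤ K - 1 := le_trans (le_max_right _ _) hK'
          linarith [hA]
      have hdiff := Phi_diff_bound hφ (a := a) (b := b) (b' := bj j)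
        (by rw [hbdef]; exact him) (hbj j) (by linarith : (0:ℝ) ≤ M)
      have hdiff2 : ‖Phi φ ((a:ℂ) + (b:ℂ) * I) - Phi φ ((a:ℂ) + (bj j : ℝ) * I)‖ ≤
          ε / 4 + ε / 4 := by
        refine hdiff.trans ?_
        have hBm : (0:ℝ) ≤ B / m := by positivity
        have h5a : |b - bj j| * M ≤ (B / m) * M :=
          mul_le_mul_of_nonneg_right hdiffb (by linarith)
        have h5 : |b - bj j| * M * C ≤ (B / m) * M * (C + 1) := by
          calc |b - bj j| * M * C ≤ (B / m) * M * C := mul_le_mul_of_nonneg_right h5a hC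
            _ ≤ (B / m) * M * (C + 1) := by nlinarith [mul_nonneg hBm (show (0:ℝ) ≤ M by linarith)]
        have h6 : (B / m) * M * (C + 1) ≤ ε / 4 := by
          rw [div_mul_eq_mul_div, div_mul_eq_mul_div, div_le_iff₀ hmR]
          nlinarith
        linarith [hMtail]
      have htri : ‖Phi φ l‖ ≤ ‖Phi φ ((a:ℂ) + (b:ℂ) * I) - Phi φ ((a:ℂ) + (bj j : ℝ) * I)‖ +
          ‖Phi φ ((a:ℂ) + (bj j : ℝ) * I)‖ := by
        have h := norm_add_le
          (Phi φ ((a:ℂ) + (b:ℂ) * I) - Phi φ ((a:ℂ) + ((bj j : ℝ):ℂ) * I))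
          (Phi φ ((a:ℂ) + ((bj j : ℝ):ℂ) * I))
        rw [sub_add_cancel] at h
        rw [hlrw]
        exact h
      linarith
  · -- |b| large
    have : b ≤ -B := by
      have h1 : |b| = -b := by
        rw [abs_of_nonpos (by rw [hbdef]; exact him)]
      have h2 : max B 1 ≤ K - 1 := by rw [hKdef]; simp [le_max_right]
      have h3 : B ≤ K - 1 := le_trans (le_max_left _ _) h2
      linarith
    exact hbBcase this

end Stmt14Aux

open Stmt14Aux

theorem stmt14 (n : ℕ) (hn : 2 ≤ n) (T t : ℝ) (ht : 0 ≤ t) (hTt : t < T)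
    (θ : ℝ) (hθ : θ ∈ Set.Icc (-(2 * (n : ℝ) - 1) * Real.pi / (2 * n)) (-Real.pi / (2 * n)))
    (φ : ℝ → ℂ) (hφ : IntegrableOn φ (Set.Ici 0))
    (hφ' : IntegrableOn (deriv φ) (Set.Ici 0)) :
    (∫ ρ : ℝ, Complex.exp (I * ρ * (T - t)) *
      ∫ x in Set.Ioi (0 : ℝ),
        Complex.exp (-(I * (Complex.exp (I * θ) * (-(I * ρ)) ^ (((n : ℂ))⁻¹)) * x)) * φ x) = 0 := by
  obtain ⟨hθ1, hθ2⟩ := hθ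
  set τ : ℝ := T - t with hτdef
  have hτ : 0 < τ := sub_pos.2 hTt
  set lam : ℂ → ℂ := fun ρ => Complex.exp (I * θ) * (-(I * ρ)) ^ (((n : ℂ))⁻¹) with hlamdef
  set F : ℂ → ℂ := fun ρ => Complex.exp (I * ρ * ((T:ℂ) - (t:ℂ))) * Phi φ (lam ρ) with hFdef
  have hC : (0:ℝ) ≤ ∫ x in Set.Ioi (0:ℝ), ‖φ x‖ :=
    setIntegral_nonneg measurableSet_Ioi (fun x _ => norm_nonneg _)
  set C : ℝ := ∫ x in Set.Ioi (0:ℝ), ‖φ x‖ with hCdef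
  -- the goal is about F
  show (∫ ρ : ℝ, F ρ) = 0
  -- basic facts about lam
  have hlam_le : ∀ ρ : ℂ, 0 ≤ ρ.im → (lam ρ).im ≤ 0 := fun ρ h => im_lam_nonpos n hn hθ1 hθ2 h
  have hlam_lt : ∀ ρ : ℂ, 0 < ρ.im → (lam ρ).im < 0 := fun ρ h => im_lam_neg n hn hθ1 hθ2 h
  have hn0 : (0:ℝ) < (n:ℝ) := by
    have : 0 < n := by omega
    exact_mod_cast this
  have hnormexp : ∀ ρ : ℂ, ‖Complex.exp (I * ρ * ((T:ℂ) - (t:ℂ)))‖ = Real.exp (-(ρ.im * τ)) := by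
    intro ρ
    rw [Complex.norm_exp]
    congr 1
    have hτc : ((T:ℂ) - (t:ℂ)) = ((τ:ℝ):ℂ) := by rw [hτdef]; push_cast; ring
    rw [hτc]
    simp [Complex.mul_re, Complex.mul_im]
  have hFbound : ∀ ρ : ℂ, 0 ≤ ρ.im → ‖F ρ‖ ≤ Real.exp (-(ρ.im * τ)) * C := by
    intro ρ h
    rw [hFdef]
    simp only
    rw [norm_mul, hnormexp]
    exact mul_le_mul_of_nonneg_left (norm_Phi_le hφ (hlam_le ρ h)) (Real.exp_pos _).le
  have hlam_cont : ContinuousOn lam {ρ : ℂ | 0 ≤ ρ.im} := by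
    intro ρ hρ
    refine ContinuousAt.continuousWithinAt ?_
    refine ContinuousAt.mul continuousAt_const ?_
    have hre : 0 < (((n:ℂ))⁻¹).re := by
      rw [show ((n:ℂ))⁻¹ = (((n:ℝ)⁻¹ : ℝ):ℂ) from by push_cast; ring]
      simpa using inv_pos.2 hn0
    have h1 : ContinuousAt (fun w : ℂ => w ^ (((n:ℂ))⁻¹)) (-(I * ρ)) := by
      apply continuousAt_cpow_const_of_re_pos _ hre
      left
      simpa using hρ
    have hf : Continuous (fun ρ : ℂ => -(I * ρ)) := by fun_prop
    exact ContinuousAt.comp (x := ρ) (g := fun w : ℂ => w ^ (((n:ℂ))⁻¹))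
      (f := fun ρ : ℂ => -(I * ρ)) h1 hf.continuousAt
  have hF_cont : ContinuousOn F {ρ : ℂ | 0 ≤ ρ.im} := by
    refine ContinuousOn.mul ?_ ?_
    · exact (Complex.continuous_exp.comp
        (by fun_prop : Continuous fun ρ : ℂ => I * ρ * ((T:ℂ) - (t:ℂ)))).continuousOn
    · exact (continuousOn_Phi hφ).comp hlam_cont (fun ρ hρ => hlam_le ρ hρ)
  have hF_diff : ∀ ρ : ℂ, 0 < ρ.im → DifferentiableAt ℂ F ρ := by
    intro ρ h
    have hslit : -(I * ρ) ∈ Complex.slitPlane := by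
      rw [Complex.mem_slitPlane_iff]
      left
      simpa using h
    have hder : HasDerivAt (fun ρ : ℂ => -(I * ρ)) (-I) ρ := by
      have := ((hasDerivAt_id ρ).const_mul I).neg
      rw [mul_one] at this
      exact this
    have hlamdiff : DifferentiableAt ℂ lam ρ :=
      ((hder.cpow_const hslit).differentiableAt).const_mul _
    have hPhidiff : DifferentiableAt ℂ (Phi φ) (lam ρ) := differentiableAt_Phi hφ (hlam_lt ρ h)
    have h1 : DifferentiableAt ℂ (fun ρ => Phi φ (lam ρ)) ρ := hPhidiff.comp ρ hlamdiff
    have h2 : DifferentiableAt ℂ (fun ρ : ℂ => Complex.exp (I * ρ * ((T:ℂ) - (t:ℂ)))) ρ :=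
      ((differentiableAt_id.const_mul I).mul_const _).cexp
    exact h2.mul h1
  -- rectangle identity
  have hrect : ∀ R H : ℝ, 0 < R → 0 < H →
      (∫ x in (-R)..R, F x) = (∫ x in (-R)..R, F (x + H * I)) +
        I • (∫ y in (0:ℝ)..H, F (-R + y * I)) - I • (∫ y in (0:ℝ)..H, F (R + y * I)) := by
    intro R H hR hH
    have key := Complex.integral_boundary_rect_eq_zero_of_continuousOn_of_differentiableOn F
      ((-R : ℝ) : ℂ) (((R:ℝ):ℂ) + ((H:ℝ):ℂ) * I) ?_ ?_
    · have e1 : (((-R : ℝ):ℂ)).re = -R := by simp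
      have e2 : ((((R:ℝ):ℂ) + ((H:ℝ):ℂ) * I)).re = R := by simp
      have e3 : (((-R : ℝ):ℂ)).im = 0 := by simp
      have e4 : ((((R:ℝ):ℂ) + ((H:ℝ):ℂ) * I)).im = H := by simp
      rw [e1, e2, e3, e4] at key
      simp only [Complex.ofReal_zero, zero_mul, add_zero, Complex.ofReal_neg] at key
      linear_combination key
    · refine hF_cont.mono ?_
      intro ρ hρ
      have h2 := (Complex.mem_reProdIm.1 hρ).2
      have e3 : (((-R : ℝ):ℂ)).im = 0 := by simp
      have e4 : ((((R:ℝ):ℂ) + ((H:ℝ):ℂ) * I)).im = H := by simp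
      rw [e3, e4, Set.uIcc_of_le hH.le] at h2
      exact h2.1
    · intro ρ hρ
      have h2 := (Complex.mem_reProdIm.1 hρ).2
      have e3 : (((-R : ℝ):ℂ)).im = 0 := by simp
      have e4 : ((((R:ℝ):ℂ) + ((H:ℝ):ℂ) * I)).im = H := by simp
      rw [e3, e4, min_eq_left hH.le, max_eq_right hH.le] at h2
      exact (hF_diff ρ h2.1).differentiableWithinAt
  by_cases hInt : Integrable (fun ρ : ℝ => F ρ) volume
  swap
  · exact integral_undef hInt
  have h1 : Tendsto (fun R : ℝ => ∫ x in (-R)..R, F x) atTop (𝓝 (∫ ρ : ℝ, F ρ)) :=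
    intervalIntegral_tendsto_integral hInt tendsto_neg_atTop_atBot tendsto_id
  have h2 : Tendsto (fun R : ℝ => ∫ x in (-R)..R, F x) atTop (𝓝 0) := by
    rw [NormedAddCommGroup.tendsto_nhds_zero]
    intro ε hε
    have hετ : 0 < ε * τ / 8 := by positivity
    obtain ⟨r, hr1, hrdec⟩ := decay hφ hετ
    filter_upwards [eventually_ge_atTop (max 1 (r ^ n))] with R hRR
    have hR1 : (1:ℝ) ≤ R := le_trans (le_max_left _ _) hRR
    have hRpos : (0:ℝ) < R := by linarith
    -- decay along vertical lines at re = ±R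
    have hlamR : ∀ c y : ℝ, |c| = R → 0 ≤ y →
        ‖Phi φ (lam ((c:ℂ) + (y:ℂ) * I))‖ ≤ ε * τ / 8 := by
      intro c y hc hy
      have him : ((c:ℂ) + (y:ℂ) * I).im = y := by simp
      refine hrdec _ (hlam_le _ (by rw [him]; exact hy)) ?_
      have hρ0 : ((c:ℂ) + (y:ℂ) * I) ≠ 0 := by
        intro h
        have : c = 0 := by
          have := congrArg Complex.re h
          simpa using this
        rw [this] at hc
        simp at hc
        linarith
      rw [hlamdef]
      simp only
      rw [abs_lam n hn θ hρ0]
      have habsρ : R ≤ ‖(c:ℂ) + (y:ℂ) * I‖ := by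
        have h3 := Complex.abs_re_le_norm ((c:ℂ) + (y:ℂ) * I)
        have h4 : (((c:ℂ) + (y:ℂ) * I)).re = c := by simp
        rw [h4, hc] at h3
        exact h3
      have hrn : r ^ n ≤ R := le_trans (le_max_right _ _) hRR
      have hr0 : (0:ℝ) ≤ r := by linarith
      have hkey : r ≤ R ^ ((n:ℝ)⁻¹) := by
        calc r = (r ^ n) ^ ((n:ℝ)⁻¹) := (Real.pow_rpow_inv_natCast hr0 (by omega)).symm
          _ ≤ R ^ ((n:ℝ)⁻¹) := Real.rpow_le_rpow (by positivity) hrn (by positivity)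
      exact hkey.trans (Real.rpow_le_rpow (by linarith) habsρ (by positivity))
    -- side estimate
    have hexpint : ∀ H : ℝ, 0 ≤ H →
        (∫ y in (0:ℝ)..H, Real.exp (-(τ * y))) = (1 - Real.exp (-(τ * H))) / τ := by
      intro H hH
      have hd : ∀ y ∈ Set.uIcc (0:ℝ) H, HasDerivAt (fun y : ℝ => -(Real.exp (-(τ * y)) / τ))
          (Real.exp (-(τ * y))) y := by
        intro y _
        have hd1 : HasDerivAt (fun y : ℝ => -(τ * y)) (-τ) y := by
          have := (hasDerivAt_id y).const_mul (-τ)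
          simpa [neg_mul] using this
        have hd2 := ((hd1.exp).div_const τ).neg
        refine hd2.congr_deriv ?_
        have : -(Real.exp (-(τ * y)) * -τ / τ) = Real.exp (-(τ * y)) * (τ / τ) := by ring
        rw [this, div_self hτ.ne', mul_one]
      rw [intervalIntegral.integral_eq_sub_of_hasDerivAt hd
        ((Real.continuous_exp.comp (by fun_prop)).intervalIntegrable _ _)]
      field_simp
      simp only [mul_zero, neg_zero, Real.exp_zero]
      ring
    have hside : ∀ c : ℝ, |c| = R → ∀ H : ℝ, 0 ≤ H →
        ‖∫ y in (0:ℝ)..H, F ((c:ℂ) + (y:ℂ) * I)‖ ≤ ε / 8 := by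
      intro c hc H hH
      have hb : ‖∫ y in (0:ℝ)..H, F ((c:ℂ) + (y:ℂ) * I)‖ ≤
          |∫ y in (0:ℝ)..H, Real.exp (-(τ * y)) * (ε * τ / 8)| := by
        refine intervalIntegral.norm_integral_le_abs_of_norm_le ?_ ?_
        · filter_upwards [ae_restrict_mem measurableSet_uIoc] with y hy
          have hy0 : 0 ≤ y := by
            rcases Set.mem_uIoc.1 hy with h | h
            · exact le_of_lt h.1
            · linarith [h.1, h.2, hH]
          have him : ((c:ℂ) + (y:ℂ) * I).im = y := by simp
          have hFb : ‖F ((c:ℂ) + (y:ℂ) * I)‖ =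
              Real.exp (-(y * τ)) * ‖Phi φ (lam ((c:ℂ) + (y:ℂ) * I))‖ := by
            rw [hFdef]
            simp only
            rw [norm_mul, hnormexp, him]
          rw [hFb]
          have := hlamR c y hc hy0
          have h5 : Real.exp (-(y * τ)) = Real.exp (-(τ * y)) := by ring_nf
          rw [h5]
          exact mul_le_mul_of_nonneg_left this (Real.exp_pos _).le
        · exact ((Real.continuous_exp.comp (by fun_prop)).mul continuous_const).intervalIntegrable _ _
      refine hb.trans ?_
      rw [intervalIntegral.integral_mul_const, hexpint H hH]
      rw [abs_mul, _root_.abs_of_nonneg (by positivity : (0:ℝ) ≤ ε * τ / 8)]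
      have h7 : |1 - Real.exp (-(τ * H))| ≤ 1 := by
        have he1 : Real.exp (-(τ * H)) ≤ 1 :=
          Real.exp_le_one_iff.2 (by nlinarith)
        have he2 := Real.exp_pos (-(τ * H))
        rw [abs_le]
        constructor <;> nlinarith
      have h6 : |(1 - Real.exp (-(τ * H))) / τ| ≤ 1 / τ := by
        rw [abs_div, _root_.abs_of_nonneg hτ.le]
        gcongr
      calc |(1 - Real.exp (-(τ * H))) / τ| * (ε * τ / 8) ≤ (1 / τ) * (ε * τ / 8) :=
            mul_le_mul_of_nonneg_right h6 (by positivity)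
        _ = ε / 8 := by field_simp
    -- choose H
    have hεexp : 0 < ε / (8 * (2 * R * C + 1)) := by positivity
    have htendH : Tendsto (fun H : ℝ => Real.exp (-(τ * H))) atTop (𝓝 0) := by
      apply Real.tendsto_exp_atBot.comp
      have h8 : Tendsto (fun H : ℝ => τ * H) atTop atTop :=
        Tendsto.const_mul_atTop hτ tendsto_id
      exact (tendsto_neg_atTop_atBot.comp h8)
    obtain ⟨H, hHexp, hH0⟩ := ((htendH.eventually (eventually_le_nhds hεexp)).and
      (eventually_gt_atTop 0)).exists
    -- top bound
    have htop : ‖∫ x in (-R)..R, F ((x:ℂ) + (H:ℂ) * I)‖ ≤ Real.exp (-(τ * H)) * C * (2 * R) := by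
      have hb := intervalIntegral.norm_integral_le_of_norm_le_const
        (C := Real.exp (-(τ * H)) * C)
        (f := fun x : ℝ => F ((x:ℂ) + (H:ℂ) * I)) (a := -R) (b := R) ?_
      · calc ‖∫ x in (-R)..R, F ((x:ℂ) + (H:ℂ) * I)‖
            ≤ (Real.exp (-(τ * H)) * C) * |R - (-R)| := hb
          _ = Real.exp (-(τ * H)) * C * (2 * R) := by
              rw [_root_.abs_of_nonneg (by linarith : (0:ℝ) ≤ R - (-R))]
              ring
      · intro x _
        have him : ((x:ℂ) + (H:ℂ) * I).im = H := by simp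
        have hFb := hFbound ((x:ℂ) + (H:ℂ) * I) (by rw [him]; exact hH0.le)
        rw [him] at hFb
        refine hFb.trans ?_
        have he : Real.exp (-(H * τ)) = Real.exp (-(τ * H)) := by ring_nf
        rw [he]
    have htop2 : Real.exp (-(τ * H)) * C * (2 * R) ≤ ε / 4 := by
      have h9 := mul_le_mul_of_nonneg_right hHexp
        (show (0:ℝ) ≤ C * (2 * R) by positivity)
      calc Real.exp (-(τ * H)) * C * (2 * R) = Real.exp (-(τ * H)) * (C * (2 * R)) := by ring
        _ ≤ ε / (8 * (2 * R * C + 1)) * (C * (2 * R)) := h9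
        _ ≤ ε / 4 := by
            rw [div_mul_eq_mul_div, div_le_iff₀ (by positivity)]
            nlinarith [mul_nonneg (mul_nonneg hε.le hRpos.le) hC,
              mul_nonneg hRpos.le hC, hε.le]
    have hs1 := hside R (_root_.abs_of_nonneg hRpos.le) H hH0.le
    have hs2 := hside (-R) (by rw [abs_neg, _root_.abs_of_nonneg hRpos.le]) H hH0.le
    simp only [Complex.ofReal_neg] at hs2
    rw [hrect R H hRpos hH0]
    have hnormI : ∀ z : ℂ, ‖I • z‖ = ‖z‖ := by
      intro z
      rw [norm_smul]
      simp
    calc ‖(∫ x in (-R)..R, F ((x:ℂ) + (H:ℂ) * I)) +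
          I • (∫ y in (0:ℝ)..H, F (-(R:ℂ) + (y:ℂ) * I)) -
          I • (∫ y in (0:ℝ)..H, F ((R:ℂ) + (y:ℂ) * I))‖
        ≤ ‖(∫ x in (-R)..R, F ((x:ℂ) + (H:ℂ) * I)) +
            I • (∫ y in (0:ℝ)..H, F (-(R:ℂ) + (y:ℂ) * I))‖ +
          ‖I • (∫ y in (0:ℝ)..H, F ((R:ℂ) + (y:ℂ) * I))‖ := norm_sub_le _ _
      _ ≤ ‖∫ x in (-R)..R, F ((x:ℂ) + (H:ℂ) * I)‖ +
          ‖I • (∫ y in (0:ℝ)..H, F (-(R:ℂ) + (y:ℂ) * I))‖ +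
          ‖I • (∫ y in (0:ℝ)..H, F ((R:ℂ) + (y:ℂ) * I))‖ := by
            have := norm_add_le (∫ x in (-R)..R, F ((x:ℂ) + (H:ℂ) * I))
              (I • (∫ y in (0:ℝ)..H, F (-(R:ℂ) + (y:ℂ) * I)))
            linarith
      _ ≤ ε / 4 + ε / 8 + ε / 8 := by
            rw [hnormI, hnormI]
            exact add_le_add (add_le_add (htop.trans htop2) hs2) hs1
      _ < ε := by linarith
  exact tendsto_nhds_unique h1 h2
end

section
/- Let α = 1/2, and let b and g be given by convergent series b(t) = Σ_{u≥0} B_u t^{u/2}, g(t) = Σ_{u≥0} G_u t^{u/2} on [0,T]. Define Y₀ arbitrarily and Y_{u+1} = (Γ((u+2)/2)/Γ((u+3)/2)) ( G_u + Σ_{v=0}^u Y_v B_{u-v} ) for u ≥ 0. If y(t) = Σ_{u≥0} Y_u t^{u/2} converges on [0,T] along with its formal Caputo half-derivative series, then y satisfies D^{1/2}y(t) − b(t)y(t) = g(t) with D^{1/2} the Caputo half-derivative, on (0,T]. -/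
open Complex MeasureTheory Set



lemma betaIntegrable {p q t : ℝ} (hp : 0 < p) (hq : 0 < q) (ht : 0 < t) :
    IntervalIntegrable (fun s : ℝ => s ^ (p - 1) * (t - s) ^ (q - 1)) volume 0 t := by
  have h1 : IntervalIntegrable (fun s : ℝ => s ^ (p - 1) * (t - s) ^ (q - 1)) volume 0 (t / 2) := by
    apply (intervalIntegral.intervalIntegrable_rpow' (by linarith)).mul_continuousOn
    have huIcc : uIcc (0 : ℝ) (t / 2) = Icc 0 (t / 2) := uIcc_of_le (by linarith)
    rw [huIcc]
    apply ContinuousOn.rpow_const (by fun_prop)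
    intro x hx
    exact Or.inl (by simp only [mem_Icc] at hx; intro h; nlinarith [hx.2])
  have h2 : IntervalIntegrable (fun s : ℝ => s ^ (p - 1) * (t - s) ^ (q - 1)) volume (t / 2) t := by
    have base : IntervalIntegrable (fun s : ℝ => (t - s) ^ (q - 1)) volume (t / 2) t := by
      have := (intervalIntegral.intervalIntegrable_rpow' (a := 0) (b := t / 2)
        (by linarith : (-1 : ℝ) < q - 1)).comp_sub_left t
      have e1 : t - 0 = t := by ring
      have e2 : t - t / 2 = t / 2 := by ring
      rw [e1, e2] at this
      exact this.symm
    have := base.mul_continuousOn (g := fun s : ℝ => s ^ (p - 1)) ?_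
    · simpa [mul_comm] using this
    · have huIcc : uIcc (t / 2) t = Icc (t / 2) t := uIcc_of_le (by linarith)
      rw [huIcc]
      apply ContinuousOn.rpow_const (by fun_prop)
      intro x hx
      exact Or.inl (by simp only [mem_Icc] at hx; intro h; nlinarith [hx.1])
  exact h1.trans h2

lemma betaReal {p q t : ℝ} (hp : 0 < p) (hq : 0 < q) (ht : 0 < t) :
    ∫ s in (0:ℝ)..t, s ^ (p - 1) * (t - s) ^ (q - 1)
      = t ^ (p + q - 1) * (Real.Gamma p * Real.Gamma q / Real.Gamma (p + q)) := by
  have hC : ∫ x in (0:ℝ)..t, (x:ℂ) ^ ((p:ℂ) - 1) * ((t:ℂ) - (x:ℂ)) ^ ((q:ℂ) - 1)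
      = (t:ℂ) ^ ((p:ℂ) + (q:ℂ) - 1) * Complex.betaIntegral p q :=
    Complex.betaIntegral_scaled p q ht
  have hbeta : Complex.betaIntegral p q
      = (Real.Gamma p : ℂ) * (Real.Gamma q : ℂ) / (Real.Gamma (p + q) : ℂ) := by
    have h := Complex.Gamma_mul_Gamma_eq_betaIntegral
      (s := (p:ℂ)) (t := (q:ℂ)) (by simpa using hp) (by simpa using hq)
    have hne : (Real.Gamma (p + q) : ℂ) ≠ 0 :=
      Complex.ofReal_ne_zero.mpr (Real.Gamma_pos_of_pos (by linarith)).ne'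
    rw [← Complex.ofReal_add, Complex.Gamma_ofReal, Complex.Gamma_ofReal, Complex.Gamma_ofReal] at h
    field_simp at h ⊢
    linear_combination -h
  have hcoe : ∫ x in (0:ℝ)..t, (x:ℂ) ^ ((p:ℂ) - 1) * ((t:ℂ) - (x:ℂ)) ^ ((q:ℂ) - 1)
      = ((∫ s in (0:ℝ)..t, s ^ (p - 1) * (t - s) ^ (q - 1) : ℝ) : ℂ) := by
    rw [← intervalIntegral.integral_ofReal]
    apply intervalIntegral.integral_congr
    intro x hx
    rw [uIcc_of_le ht.le, mem_Icc] at hx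
    simp only []
    rw [Complex.ofReal_mul, Complex.ofReal_cpow hx.1, Complex.ofReal_cpow (by linarith : (0:ℝ) ≤ t - x)]
    push_cast
    ring
  have htp : ((t ^ (p + q - 1) : ℝ) : ℂ) = (t:ℂ) ^ ((p:ℂ) + (q:ℂ) - 1) := by
    rw [Complex.ofReal_cpow ht.le]
    push_cast
    ring_nf
  have := hC
  rw [hcoe, hbeta, ← htp] at this
  have : ((∫ s in (0:ℝ)..t, s ^ (p - 1) * (t - s) ^ (q - 1) : ℝ) : ℂ)
      = ((t ^ (p + q - 1) * (Real.Gamma p * Real.Gamma q / Real.Gamma (p + q)) : ℝ) : ℂ) := by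
    rw [this]; push_cast; ring
  exact_mod_cast this


lemma deriv_series {T : ℝ} (hT : 0 < T) (Y : ℕ → ℂ) (y : ℝ → ℂ)
    (hy : ∀ t ∈ Set.Icc (0:ℝ) T, HasSum (fun u : ℕ => Y u * ((t ^ ((u:ℝ)/2) : ℝ) : ℂ)) (y t)) :
    ∀ s ∈ Set.Ioo (0:ℝ) T,
      HasDerivAt y (∑' u : ℕ, Y u * ((((u:ℝ)/2) * s ^ ((u:ℝ)/2 - 1) : ℝ) : ℂ)) s := by
  have hsum0 : Summable (fun u : ℕ => ‖Y u‖ * T ^ ((u:ℝ)/2)) := by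
    have h1 := summable_norm_iff.mpr (hy T ⟨hT.le, le_refl T⟩).summable
    refine h1.congr fun u => ?_
    simp [norm_mul, Complex.norm_real, Real.norm_eq_abs,
      _root_.abs_of_nonneg (Real.rpow_nonneg hT.le _)]
  obtain ⟨C, hC⟩ : ∃ C, ∀ u : ℕ, ‖Y u‖ * T ^ ((u:ℝ)/2) ≤ C := by
    obtain ⟨C, hC⟩ := hsum0.tendsto_atTop_zero.bddAbove_range
    exact ⟨C, fun u => hC (Set.mem_range_self u)⟩
  have hTLU : TendstoLocallyUniformlyOn
      (fun (n:ℕ) (x:ℝ) => ∑ u ∈ Finset.range n, Y u * ((((u:ℝ)/2) * x ^ ((u:ℝ)/2 - 1) : ℝ) : ℂ))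
      (fun x => ∑' u : ℕ, Y u * ((((u:ℝ)/2) * x ^ ((u:ℝ)/2 - 1) : ℝ) : ℂ))
      Filter.atTop (Set.Ioo 0 T) := by
    rw [tendstoLocallyUniformlyOn_iff_forall_isCompact isOpen_Ioo]
    intro K hK hKc
    rcases K.eq_empty_or_nonempty with rfl | hne
    · exact tendstoUniformlyOn_empty
    have haK : sInf K ∈ K := hKc.sInf_mem hne
    have hcK : sSup K ∈ K := hKc.sSup_mem hne
    set a := sInf K
    set c := sSup K
    have ha0 : 0 < a := (hK haK).1
    have hcT : c < T := (hK hcK).2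
    have hc0 : 0 < c := (hK hcK).1
    set q := (c/T) ^ ((1:ℝ)/2) with hq_def
    have hq0 : 0 ≤ q := Real.rpow_nonneg (by positivity) _
    have hq1 : q < 1 := Real.rpow_lt_one (by positivity) ((div_lt_one hT).2 hcT) (by norm_num)
    have hqn : ‖q‖ < 1 := by rwa [Real.norm_eq_abs, _root_.abs_of_nonneg hq0]
    have hsumM : Summable (fun u : ℕ => C / a * ((u:ℝ) * q ^ u)) :=
      Summable.mul_left _ (by simpa using summable_pow_mul_geometric_of_norm_lt_one 1 hqn)
    apply tendstoUniformlyOn_tsum_nat hsumM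
    intro u x hx
    have hax : a ≤ x := csInf_le hKc.bddBelow hx
    have hxc : x ≤ c := le_csSup hKc.bddAbove hx
    have hx0 : 0 < x := lt_of_lt_of_le ha0 hax
    rw [norm_mul, Complex.norm_real, Real.norm_eq_abs,
      _root_.abs_of_nonneg (by positivity : (0:ℝ) ≤ (u:ℝ)/2 * x ^ ((u:ℝ)/2 - 1))]
    have h3 : c ^ ((u:ℝ)/2) = T ^ ((u:ℝ)/2) * q ^ u := by
      have hc' : c = T * (c/T) := by field_simp
      rw [hq_def, ← Real.rpow_natCast ((c/T) ^ ((1:ℝ)/2)) u, ← Real.rpow_mul (by positivity)]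
      nth_rewrite 1 [hc']
      rw [Real.mul_rpow hT.le (by positivity)]
      congr 1
      congr 1
      push_cast; ring
    have hxle : x ^ ((u:ℝ)/2 - 1) ≤ T ^ ((u:ℝ)/2) * q ^ u / a := by
      rw [Real.rpow_sub hx0, Real.rpow_one, ← h3]
      exact div_le_div₀ (by positivity) (Real.rpow_le_rpow hx0.le hxc (by positivity)) ha0 hax
    calc ‖Y u‖ * ((u:ℝ)/2 * x ^ ((u:ℝ)/2 - 1))
        ≤ ‖Y u‖ * ((u:ℝ)/2 * (T ^ ((u:ℝ)/2) * q ^ u / a)) := by gcongr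
      _ = ‖Y u‖ * T ^ ((u:ℝ)/2) * ((u:ℝ)/2) * q ^ u / a := by ring
      _ ≤ C * (u:ℝ) * q ^ u / a := by
          have hC0 : (0:ℝ) ≤ C := le_trans (by positivity) (hC 0)
          gcongr ?x * _ / _
          exact mul_le_mul (hC u) (by linarith [Nat.cast_nonneg (α := ℝ) u])
            (by positivity) hC0
      _ = C / a * ((u:ℝ) * q ^ u) := by ring
  have hpartial : ∀ n : ℕ, ∀ x ∈ Set.Ioo (0:ℝ) T,
      HasDerivAt (fun s => ∑ u ∈ Finset.range n, Y u * ((s ^ ((u:ℝ)/2) : ℝ) : ℂ))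
        (∑ u ∈ Finset.range n, Y u * ((((u:ℝ)/2) * x ^ ((u:ℝ)/2 - 1) : ℝ) : ℂ)) x := by
    intro n x hx
    apply HasDerivAt.fun_sum
    intro u _
    exact HasDerivAt.const_mul (Y u)
      ((Real.hasDerivAt_rpow_const (Or.inl hx.1.ne')).ofReal_comp)
  intro s hs
  exact hasDerivAt_of_tendstoLocallyUniformlyOn isOpen_Ioo hTLU
    (Filter.Eventually.of_forall hpartial)
    (fun x hx => (hy x ⟨hx.1.le, hx.2.le⟩).tendsto_sum_nat) hs

lemma term_integrable {t p : ℝ} (ht : 0 < t) (hp : 0 < p) (c : ℂ) :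
    IntegrableOn (fun s : ℝ => c * (((p * s ^ (p - 1)) : ℝ) : ℂ)
      * (((t - s) ^ (-(1/2:ℝ)) : ℝ) : ℂ)) (Ioo 0 t) := by
  have h1 : IntegrableOn (fun s : ℝ => s ^ (p - 1) * (t - s) ^ ((1/2:ℝ) - 1)) (Ioo 0 t) volume :=
    ((intervalIntegrable_iff_integrableOn_Ioc_of_le ht.le).mp
      (betaIntegrable hp one_half_pos ht)).mono_set Ioo_subset_Ioc_self
  have h2 := (Complex.ofRealCLM.integrable_comp h1).const_mul (c * (p:ℂ))
  have heq : (fun s : ℝ => c * (((p * s ^ (p - 1)) : ℝ) : ℂ) * (((t - s) ^ (-(1/2:ℝ)) : ℝ) : ℂ))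
      = fun s : ℝ => (c * (p:ℂ)) * Complex.ofRealCLM (s ^ (p - 1) * (t - s) ^ ((1/2:ℝ) - 1)) := by
    funext s
    have : (-(1/2:ℝ)) = (1/2:ℝ) - 1 := by norm_num
    rw [this]
    simp only [Complex.ofRealCLM_apply]
    push_cast
    ring
  rw [heq]
  exact h2

lemma term_integral {t p : ℝ} (ht : 0 < t) (hp : 0 < p) (c : ℂ) :
    ∫ s in Ioo (0:ℝ) t, c * (((p * s ^ (p - 1)) : ℝ) : ℂ) * (((t - s) ^ (-(1/2:ℝ)) : ℝ) : ℂ)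
      = c * ((Real.Gamma (p + 1) * Real.Gamma (1/2) / Real.Gamma (p + 1/2)
          * t ^ (p - 1/2) : ℝ) : ℂ) := by
  have hexp : (-(1/2:ℝ)) = (1/2:ℝ) - 1 := by norm_num
  have hreal : ∫ s in (0:ℝ)..t, s ^ (p - 1) * (t - s) ^ ((1/2:ℝ) - 1)
      = t ^ (p + 1/2 - 1) * (Real.Gamma p * Real.Gamma (1/2) / Real.Gamma (p + 1/2)) :=
    betaReal hp one_half_pos ht
  calc ∫ s in Ioo (0:ℝ) t, c * (((p * s ^ (p - 1)) : ℝ) : ℂ) * (((t - s) ^ (-(1/2:ℝ)) : ℝ) : ℂ)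
      = ∫ s in Ioo (0:ℝ) t, (c * (p:ℂ)) * ((s ^ (p - 1) * (t - s) ^ ((1/2:ℝ) - 1) : ℝ) : ℂ) := by
        refine setIntegral_congr_fun measurableSet_Ioo fun s _ => ?_
        rw [hexp]; push_cast; ring
    _ = (c * (p:ℂ)) * ((∫ s in Ioo (0:ℝ) t, s ^ (p - 1) * (t - s) ^ ((1/2:ℝ) - 1) : ℝ) : ℂ) := by
        rw [MeasureTheory.integral_const_mul]
        congr 1
        exact integral_ofReal
    _ = c * ((Real.Gamma (p + 1) * Real.Gamma (1/2) / Real.Gamma (p + 1/2)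
          * t ^ (p - 1/2) : ℝ) : ℂ) := by
        rw [← integral_Ioc_eq_integral_Ioo, ← intervalIntegral.integral_of_le ht.le, hreal,
          Real.Gamma_add_one hp.ne']
        push_cast
        have : p + 1/2 - 1 = p - 1/2 := by ring
        rw [this]
        ring

lemma term_norm_integral {t p : ℝ} (ht : 0 < t) (hp : 0 < p) (c : ℂ) :
    ∫ s in Ioo (0:ℝ) t, ‖c * (((p * s ^ (p - 1)) : ℝ) : ℂ) * (((t - s) ^ (-(1/2:ℝ)) : ℝ) : ℂ)‖
      = ‖c‖ * (Real.Gamma (p + 1) * Real.Gamma (1/2) / Real.Gamma (p + 1/2) * t ^ (p - 1/2)) := by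
  have hexp : (-(1/2:ℝ)) = (1/2:ℝ) - 1 := by norm_num
  have hreal : ∫ s in (0:ℝ)..t, s ^ (p - 1) * (t - s) ^ ((1/2:ℝ) - 1)
      = t ^ (p + 1/2 - 1) * (Real.Gamma p * Real.Gamma (1/2) / Real.Gamma (p + 1/2)) :=
    betaReal hp one_half_pos ht
  calc ∫ s in Ioo (0:ℝ) t, ‖c * (((p * s ^ (p - 1)) : ℝ) : ℂ) * (((t - s) ^ (-(1/2:ℝ)) : ℝ) : ℂ)‖
      = ∫ s in Ioo (0:ℝ) t, (‖c‖ * p) * (s ^ (p - 1) * (t - s) ^ ((1/2:ℝ) - 1)) := by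
        refine setIntegral_congr_fun measurableSet_Ioo fun s hs => ?_
        rw [hexp, norm_mul, norm_mul, Complex.norm_real, Complex.norm_real, Real.norm_eq_abs,
          Real.norm_eq_abs, _root_.abs_of_nonneg (mul_nonneg hp.le (Real.rpow_nonneg hs.1.le _)),
          _root_.abs_of_nonneg (Real.rpow_nonneg (by linarith [hs.2] : (0:ℝ) ≤ t - s) _)]
        ring
    _ = (‖c‖ * p) * ∫ s in Ioo (0:ℝ) t, s ^ (p - 1) * (t - s) ^ ((1/2:ℝ) - 1) := by
        rw [MeasureTheory.integral_const_mul]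
    _ = ‖c‖ * (Real.Gamma (p + 1) * Real.Gamma (1/2) / Real.Gamma (p + 1/2) * t ^ (p - 1/2)) := by
        rw [← integral_Ioc_eq_integral_Ioo, ← intervalIntegral.integral_of_le ht.le, hreal,
          Real.Gamma_add_one hp.ne']
        have : p + 1/2 - 1 = p - 1/2 := by ring
        rw [this]
        ring


/-- Caputo fractional derivative of order `α` (left-sided, based at `0`) of a
complex-valued function. -/
noncomputable def caputoC (α : ℝ) (y : ℝ → ℂ) (x : ℝ) : ℂ :=
  (1 / (Real.Gamma (1 - α) : ℂ)) * ∫ t in (0 : ℝ)..x, deriv y t * ((((x - t) ^ (-α) : ℝ)) : ℂ)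

noncomputable def gterm (Y : ℕ → ℂ) (t : ℝ) (u : ℕ) (s : ℝ) : ℂ :=
  Y u * ((((u:ℝ)/2) * s ^ ((u:ℝ)/2 - 1) : ℝ) : ℂ) * (((t - s) ^ (-(1/2:ℝ)) : ℝ) : ℂ)

lemma gterm_zero (Y : ℕ → ℂ) (t : ℝ) : gterm Y t 0 = fun _ => 0 := by
  funext s; simp [gterm]

lemma gterm_succ (Y : ℕ → ℂ) (t : ℝ) (v : ℕ) :
    gterm Y t (v+1) = fun s : ℝ => Y (v+1) * (((((v:ℝ)+1)/2) * s ^ ((((v:ℝ)+1)/2) - 1) : ℝ) : ℂ)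
      * (((t - s) ^ (-(1/2:ℝ)) : ℝ) : ℂ) := by
  funext s
  simp only [gterm]
  norm_num

set_option maxHeartbeats 2000000 in
lemma caputo_eval {T : ℝ} (hT : 0 < T) (Y : ℕ → ℂ) (y : ℝ → ℂ)
    (hy : ∀ t ∈ Set.Icc (0:ℝ) T, HasSum (fun u : ℕ => Y u * ((t ^ ((u:ℝ)/2) : ℝ) : ℂ)) (y t))
    (hD : ∀ t ∈ Set.Icc (0 : ℝ) T, Summable (fun u : ℕ =>
      Y (u + 1) * (((Real.Gamma (((u : ℝ) + 1) / 2 + 1) / Real.Gamma ((u : ℝ) / 2 + 1) : ℝ)) : ℂ)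
        * (((t ^ ((u : ℝ) / 2) : ℝ)) : ℂ)))
    {t : ℝ} (ht0 : 0 < t) (htT : t ≤ T) :
    caputoC (1/2) y t = ∑' v : ℕ,
      Y (v + 1) * (((Real.Gamma (((v : ℝ) + 1) / 2 + 1) / Real.Gamma ((v : ℝ) / 2 + 1) : ℝ)) : ℂ)
        * (((t ^ ((v : ℝ) / 2) : ℝ)) : ℂ) := by
  have htIcc : t ∈ Set.Icc (0:ℝ) T := ⟨ht0.le, htT⟩
  have hSsumm := hD t htIcc
  have hderiv := deriv_series hT Y y hy
  -- per-term facts, with p = (v+1)/2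
  have hp : ∀ v : ℕ, (0:ℝ) < ((v:ℝ)+1)/2 := fun v => by positivity
  have e1 : ∀ v : ℕ, ((v:ℝ)+1)/2 + 1/2 = (v:ℝ)/2 + 1 := fun v => by ring
  have e2 : ∀ v : ℕ, ((v:ℝ)+1)/2 - 1/2 = (v:ℝ)/2 := fun v => by ring
  have hint : ∀ u : ℕ, IntegrableOn (gterm Y t u) (Set.Ioo 0 t) := by
    intro u
    cases u with
    | zero => rw [gterm_zero]; exact integrableOn_zero
    | succ v => rw [gterm_succ]; exact term_integrable ht0 (hp v) (Y (v+1))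
  have hvalsucc : ∀ v : ℕ, ∫ s in Ioo (0:ℝ) t, gterm Y t (v+1) s
      = (Real.Gamma (1/2) : ℂ) * (Y (v+1)
          * (((Real.Gamma (((v:ℝ)+1)/2 + 1) / Real.Gamma ((v:ℝ)/2 + 1) : ℝ)) : ℂ)
          * (((t ^ ((v:ℝ)/2) : ℝ)) : ℂ)) := by
    intro v
    rw [gterm_succ]
    rw [term_integral ht0 (hp v) (Y (v+1)), e1 v, e2 v]
    push_cast
    ring
  have hnormsucc : ∀ v : ℕ, ∫ s in Ioo (0:ℝ) t, ‖gterm Y t (v+1) s‖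
      = Real.Gamma (1/2) * (‖Y (v+1)‖
          * (Real.Gamma (((v:ℝ)+1)/2 + 1) / Real.Gamma ((v:ℝ)/2 + 1)) * t ^ ((v:ℝ)/2)) := by
    intro v
    rw [gterm_succ]
    rw [term_norm_integral ht0 (hp v) (Y (v+1)), e1 v, e2 v]
    ring
  have hesumm : Summable (fun v : ℕ => ‖Y (v+1)‖
      * (Real.Gamma (((v:ℝ)+1)/2 + 1) / Real.Gamma ((v:ℝ)/2 + 1)) * t ^ ((v:ℝ)/2)) := by
    have h1 := summable_norm_iff.mpr hSsumm
    refine h1.congr fun v => ?_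
    rw [norm_mul, norm_mul, Complex.norm_real, Complex.norm_real, Real.norm_eq_abs,
      Real.norm_eq_abs,
      _root_.abs_of_nonneg (div_nonneg (Real.Gamma_pos_of_pos (by positivity)).le
        (Real.Gamma_pos_of_pos (by positivity)).le),
      _root_.abs_of_nonneg (Real.rpow_nonneg ht0.le _)]
  have hfin : ∑' u : ℕ, ∫⁻ s in Ioo (0:ℝ) t, ‖gterm Y t u s‖₊ ≠ ⊤ := by
    set E : ℕ → ℝ := fun u => Nat.casesOn u 0 (fun v => ‖Y (v+1)‖
      * (Real.Gamma (((v:ℝ)+1)/2 + 1) / Real.Gamma ((v:ℝ)/2 + 1)) * t ^ ((v:ℝ)/2)) with hE_def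
    have hE0 : ∀ u, 0 ≤ E u := by
      intro u
      cases u with
      | zero => simp [hE_def]
      | succ v =>
          simp only [hE_def]
          have := (Real.Gamma_pos_of_pos (show (0:ℝ) < ((v:ℝ)+1)/2 + 1 by positivity)).le
          have := (Real.Gamma_pos_of_pos (show (0:ℝ) < (v:ℝ)/2 + 1 by positivity)).le
          positivity
    have hEsumm : Summable E := by
      apply (summable_nat_add_iff 1).mp
      exact hesumm.congr fun v => rfl
    have hlin : ∀ u : ℕ, ∫⁻ s in Ioo (0:ℝ) t, (‖gterm Y t u s‖₊ : ENNReal)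
        = ENNReal.ofReal (Real.Gamma (1/2) * E u) := by
      intro u
      simp only [← enorm_eq_nnnorm]
      rw [← ofReal_integral_norm_eq_lintegral_enorm (hint u)]
      congr 1
      cases u with
      | zero => rw [gterm_zero]; simp [hE_def]
      | succ v => rw [hnormsucc v]
    simp only [hlin]
    rw [← ENNReal.ofReal_tsum_of_nonneg (fun u => mul_nonneg
      (Real.Gamma_pos_of_pos (by norm_num : (0:ℝ) < 1/2)).le (hE0 u)) (hEsumm.mul_left _)]
    exact ENNReal.ofReal_ne_top
  -- the integral identity
  have hint_eq : ∫ s in (0:ℝ)..t, deriv y s * (((t - s) ^ (-(1/2:ℝ)) : ℝ) : ℂ)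
      = (Real.Gamma (1/2) : ℂ) * ∑' v : ℕ,
        Y (v + 1) * (((Real.Gamma (((v:ℝ)+1)/2 + 1) / Real.Gamma ((v:ℝ)/2 + 1) : ℝ)) : ℂ)
          * (((t ^ ((v:ℝ)/2) : ℝ)) : ℂ) := by
    rw [intervalIntegral.integral_of_le ht0.le, integral_Ioc_eq_integral_Ioo]
    have hcongr : ∀ s ∈ Set.Ioo (0:ℝ) t,
        deriv y s * (((t - s) ^ (-(1/2:ℝ)) : ℝ) : ℂ) = ∑' u : ℕ, gterm Y t u s := by
      intro s hs
      have hsT : s ∈ Set.Ioo (0:ℝ) T := ⟨hs.1, lt_of_lt_of_le hs.2 htT⟩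
      rw [(hderiv s hsT).deriv]
      exact (tsum_mul_right).symm
    rw [setIntegral_congr_fun measurableSet_Ioo hcongr,
      MeasureTheory.integral_tsum (fun u => (hint u).aestronglyMeasurable) hfin]
    have hIsumm : Summable (fun u : ℕ => ∫ s in Ioo (0:ℝ) t, gterm Y t u s) := by
      apply (summable_nat_add_iff 1).mp
      refine Summable.congr (hSsumm.mul_left ((Real.Gamma (1/2) : ℂ))) fun v => ?_
      exact (hvalsucc v).symm
    rw [Summable.tsum_eq_zero_add hIsumm]
    have h0 : ∫ s in Ioo (0:ℝ) t, gterm Y t 0 s = 0 := by rw [gterm_zero]; simp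
    rw [h0, zero_add, tsum_congr hvalsucc, tsum_mul_left]
  -- conclude
  have hΓ : (Real.Gamma (1/2:ℝ) : ℂ) ≠ 0 :=
    Complex.ofReal_ne_zero.mpr (Real.Gamma_pos_of_pos (by norm_num)).ne'
  unfold caputoC
  rw [show (1:ℝ) - 1/2 = 1/2 by norm_num, hint_eq]
  field_simp


theorem stmt19 (T : ℝ) (hT : 0 < T) (B G Y : ℕ → ℂ) (b g y : ℝ → ℂ)
    (hb : ∀ t ∈ Set.Icc (0 : ℝ) T,
      HasSum (fun u : ℕ => B u * (((t ^ ((u : ℝ) / 2) : ℝ)) : ℂ)) (b t))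
    (hg : ∀ t ∈ Set.Icc (0 : ℝ) T,
      HasSum (fun u : ℕ => G u * (((t ^ ((u : ℝ) / 2) : ℝ)) : ℂ)) (g t))
    -- the recurrence `Y_{u+1} = (Γ((u+2)/2)/Γ((u+3)/2)) (G_u + Σ_{v=0}^u Y_v B_{u-v})`
    (hY : ∀ u : ℕ, Y (u + 1)
      = (((Real.Gamma (((u : ℝ) + 2) / 2) / Real.Gamma (((u : ℝ) + 3) / 2) : ℝ)) : ℂ)
          * (G u + ∑ v ∈ Finset.range (u + 1), Y v * B (u - v)))
    (hy : ∀ t ∈ Set.Icc (0 : ℝ) T,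
      HasSum (fun u : ℕ => Y u * (((t ^ ((u : ℝ) / 2) : ℝ)) : ℂ)) (y t))
    -- the formal Caputo half-derivative series of `y` converges on `[0,T]`
    (hD : ∀ t ∈ Set.Icc (0 : ℝ) T, Summable (fun u : ℕ =>
      Y (u + 1) * (((Real.Gamma (((u : ℝ) + 1) / 2 + 1) / Real.Gamma ((u : ℝ) / 2 + 1) : ℝ)) : ℂ)
        * (((t ^ ((u : ℝ) / 2) : ℝ)) : ℂ))) :
    ∀ t ∈ Set.Ioc (0 : ℝ) T, caputoC (1 / 2) y t - b t * y t = g t := by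
  intro t ht
  obtain ⟨ht0, htT⟩ := ht
  have htIcc : t ∈ Set.Icc (0:ℝ) T := ⟨ht0.le, htT⟩
  have hSsumm := hD t htIcc
  have hGsumm := (hg t htIcc).summable
  -- Step B : Cauchy product
  have hprod : b t * y t = ∑' u : ℕ,
      ((∑ v ∈ Finset.range (u+1), Y v * B (u - v)) * ((t ^ ((u:ℝ)/2) : ℝ) : ℂ)) := by
    have hYn := summable_norm_iff.mpr (hy t htIcc).summable
    have hBn := summable_norm_iff.mpr (hb t htIcc).summable
    have h := tsum_mul_tsum_eq_tsum_sum_range_of_summable_norm hYn hBn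
    rw [(hy t htIcc).tsum_eq, (hb t htIcc).tsum_eq] at h
    rw [mul_comm (b t) (y t), h]
    refine tsum_congr fun n => ?_
    rw [Finset.sum_mul]
    refine Finset.sum_congr rfl fun k hk => ?_
    have hk' : k ≤ n := Nat.lt_succ_iff.mp (Finset.mem_range.mp hk)
    have hpow : t ^ ((k:ℝ)/2) * t ^ (((n-k:ℕ):ℝ)/2) = t ^ ((n:ℝ)/2) := by
      rw [← Real.rpow_add ht0]
      congr 1
      rw [Nat.cast_sub hk']
      ring
    calc Y k * ((t ^ ((k:ℝ)/2) : ℝ) : ℂ) * (B (n-k) * ((t ^ (((n-k:ℕ):ℝ)/2) : ℝ) : ℂ))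
        = Y k * B (n-k) * ((t ^ ((k:ℝ)/2) * t ^ (((n-k:ℕ):ℝ)/2) : ℝ) : ℂ) := by
          push_cast; ring
      _ = Y k * B (n-k) * ((t ^ ((n:ℝ)/2) : ℝ) : ℂ) := by rw [hpow]
  -- Step C : combine
  have hPS : ∀ u : ℕ,
      (∑ v ∈ Finset.range (u+1), Y v * B (u - v)) * ((t ^ ((u:ℝ)/2) : ℝ) : ℂ)
      = Y (u + 1) * (((Real.Gamma (((u:ℝ)+1)/2 + 1) / Real.Gamma ((u:ℝ)/2 + 1) : ℝ)) : ℂ)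
          * ((t ^ ((u:ℝ)/2) : ℝ) : ℂ) - G u * ((t ^ ((u:ℝ)/2) : ℝ) : ℂ) := by
    intro u
    have hγ2 : (0:ℝ) < Real.Gamma (((u:ℝ)+2)/2) := Real.Gamma_pos_of_pos (by positivity)
    have hγ3 : (0:ℝ) < Real.Gamma (((u:ℝ)+3)/2) := Real.Gamma_pos_of_pos (by positivity)
    have e1 : ((u:ℝ)+1)/2 + 1 = ((u:ℝ)+3)/2 := by ring
    have e2 : (u:ℝ)/2 + 1 = ((u:ℝ)+2)/2 := by ring
    rw [e1, e2, hY u]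
    have hAA : ((Real.Gamma (((u:ℝ)+2)/2) / Real.Gamma (((u:ℝ)+3)/2) : ℝ) : ℂ)
        * ((Real.Gamma (((u:ℝ)+3)/2) / Real.Gamma (((u:ℝ)+2)/2) : ℝ) : ℂ) = 1 := by
      rw [← Complex.ofReal_mul]
      have : (Real.Gamma (((u:ℝ)+2)/2) / Real.Gamma (((u:ℝ)+3)/2))
          * (Real.Gamma (((u:ℝ)+3)/2) / Real.Gamma (((u:ℝ)+2)/2)) = 1 := by
        field_simp
      rw [this, Complex.ofReal_one]
    linear_combination (-(G u + ∑ v ∈ Finset.range (u+1), Y v * B (u - v))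
      * ((t ^ ((u:ℝ)/2) : ℝ) : ℂ)) * hAA
  rw [caputo_eval hT Y y hy hD ht0 htT, hprod, tsum_congr hPS,
    Summable.tsum_sub hSsumm hGsumm, (hg t htIcc).tsum_eq]
  ring
end
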